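/- arXiv:1404.0843 — 6 statements merged into one kernel-verified Lean document; each statement's English description precedes it below -/
import Mathlib

section
/- The parity winning condition is cyc-Parity-greedy on every arena: if every cycle in the cycles-decomposition of a play has even maximal priority, then the largest priority occurring infinitely often in the play is even; and if every cycle in the decomposition has odd maximal priority, then the largest priority occurring infinitely often is odd. -/
structure Arena (U : Type) where
  V : Type
  finV : Fintype V
  decV : DecidableEq V
  owner : V → Fin 2
  E : V → V → Prop
  nodead : ∀ v, ∃ w, E v w
  lab : V → V → U

namespace Arena

variable {U : Type} (A : Arena U)

instance : DecidableEq A.V := A.decV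
instance : Fintype A.V := A.finV

/-- An infinite play: consecutive vertices are connected by edges. -/
def IsPlay (π : ℕ → A.V) : Prop := ∀ j, A.E (π j) (π (j + 1))

/-- A strategy: given the history (past vertices, in order) and the current
vertex, produce the next vertex. -/
abbrev Strategy := List A.V → A.V → A.V

def Legal (S : A.Strategy) : Prop := ∀ h v, A.E v (S h v)

def Memoryless (S : A.Strategy) : Prop := ∀ h h' v, S h v = S h' v

/-- The history of a play: the first `j` vertices. -/
def hist (π : ℕ → A.V) (j : ℕ) : List A.V := (List.range j).map π

/-- A play is consistent with a strategy of player `i`. -/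
def Consistent (i : Fin 2) (S : A.Strategy) (π : ℕ → A.V) : Prop :=
  ∀ j, A.owner (π j) = i → π (j + 1) = S (A.hist π j) (π j)

/-- One step of the stack-based cycles-decomposition algorithm.  The stack is
a list of vertices (a simple path).  Pushing vertex `v`: if `v` already occurs
on the stack, the cycle from (the first occurrence of) `v` to the top is popped
and output (represented by its list of vertices, starting with `v`, with an
implicit closing edge back to `v`); otherwise `v` is pushed. -/
def step (s : List A.V) (v : A.V) : List A.V × Option (List A.V) :=
  if v ∈ s then (s.take (s.idxOf v + 1), some (s.drop (s.idxOf v)))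
  else (s ++ [v], none)

/-- The stack after processing vertices `π 0, …, π n`. -/
def stackAt (π : ℕ → A.V) : ℕ → List A.V
  | 0 => [π 0]
  | n + 1 => (A.step (stackAt π n) (π (n + 1))).1

/-- The cycle (if any) output while processing vertex `π (n+1)`. -/
def cycleAt (π : ℕ → A.V) (n : ℕ) : Option (List A.V) :=
  (A.step (A.stackAt π n) (π (n + 1))).2

/-- The labels of the edges of a cycle `[v, w₁, …, w_k]`, i.e. of the edges
`(v,w₁)(w₁,w₂)…(w_k,v)`. -/
def cycLabels : List A.V → List U
  | [] => []
  | v :: rest => List.zipWith A.lab (v :: rest) (rest ++ [v])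

def Objective := (ℕ → A.V) → Prop

/-- First-cycle objective: the first cycle output by the decomposition has its
labels in `Y`. -/
def FCObj (Y : Set (List U)) : A.Objective := fun π =>
  ∃ n c, A.cycleAt π n = some c ∧ (∀ m, m < n → A.cycleAt π m = none) ∧
    A.cycLabels c ∈ Y

/-- All-cycles objective: every cycle of the decomposition has labels in `Y`. -/
def ACObj (Y : Set (List U)) : A.Objective := fun π =>
  ∀ n c, A.cycleAt π n = some c → A.cycLabels c ∈ Y

def shift (π : ℕ → A.V) (k : ℕ) : ℕ → A.V := fun n => π (n + k)

/-- Suffix all-cycles objective: some suffix of the play has all cycles of its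
decomposition with labels in `Y`. -/
def EACObj (Y : Set (List U)) : A.Objective := fun π =>
  ∃ k, A.ACObj Y (A.shift π k)

/-- The objective induced by a winning condition `W ⊆ U^ω`. -/
def WObj (W : Set (ℕ → U)) : A.Objective := fun π =>
  (fun j => A.lab (π j) (π (j + 1))) ∈ W

/-- `S` is a winning strategy for player `i` from `v` for objective `O`. -/
def WinsFrom (O : A.Objective) (i : Fin 2) (S : A.Strategy) (v : A.V) : Prop :=
  A.Legal S ∧ ∀ π, A.IsPlay π → π 0 = v → A.Consistent i S π →
    (if i = 0 then O π else ¬ O π)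

def WinRegion (O : A.Objective) (i : Fin 2) : Set A.V :=
  { v | ∃ S, A.WinsFrom O i S v }

def PointwiseMemoryless (O : A.Objective) (i : Fin 2) : Prop :=
  ∀ v ∈ A.WinRegion O i, ∃ S, A.Memoryless S ∧ A.WinsFrom O i S v

def UniformMemoryless (O : A.Objective) (i : Fin 2) : Prop :=
  ∃ S, A.Memoryless S ∧ ∀ v ∈ A.WinRegion O i, A.WinsFrom O i S v

def Determined (O : A.Objective) : Prop :=
  ∀ v, v ∈ A.WinRegion O 0 ∨ v ∈ A.WinRegion O 1

def PointwiseMemDet (O : A.Objective) : Prop :=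
  A.Determined O ∧ A.PointwiseMemoryless O 0 ∧ A.PointwiseMemoryless O 1

def UniformMemDet (O : A.Objective) : Prop :=
  A.Determined O ∧ A.UniformMemoryless O 0 ∧ A.UniformMemoryless O 1

/-- The game `(A, O)` is `Y`-greedy. -/
def YGreedy (Y : Set (List U)) (O : A.Objective) : Prop :=
  (∀ π, A.IsPlay π → A.ACObj Y π → O π) ∧
  (∀ π, A.IsPlay π → A.ACObj Yᶜ π → ¬ O π)

/-- The arena `A` is `Y`-unambiguous. -/
def Unambiguous (Y : Set (List U)) : Prop :=
  ∀ π, A.IsPlay π → ¬ (A.EACObj Y π ∧ A.EACObj Yᶜ π)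

/-- All vertices belong to player `i`. -/
def SolitaireFor (i : Fin 2) : Prop := ∀ v, A.owner v = i

end Arena

/-- A cycle property is closed under cyclic permutations. -/
def ClosedCyc {U : Type} (Y : Set (List U)) : Prop :=
  ∀ (a : U) (b : List U), (a :: b) ∈ Y → (b ++ [a]) ∈ Y

/-- A cycle property is closed under concatenation. -/
def ClosedConcat {U : Type} (Y : Set (List U)) : Prop :=
  ∀ a b, a ∈ Y → b ∈ Y → (a ++ b) ∈ Y

/-- A Moore machine generating a strategy on arena `A`. -/
structure Moore {U : Type} (A : Arena U) where
  M : Type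
  finM : Fintype M
  m0 : M
  upd : A.V → M → M
  out : A.V → M → A.V

namespace Moore

variable {U : Type} {A : Arena U}

def card (Mm : Moore A) : ℕ := @Fintype.card Mm.M Mm.finM

/-- Memory state reached after reading a history. -/
def run (Mm : Moore A) (h : List A.V) : Mm.M :=
  h.foldl (fun m x => Mm.upd x m) Mm.m0

/-- The Moore machine generates strategy `S`. -/
def Generates (Mm : Moore A) (S : A.Strategy) : Prop :=
  ∀ h x, S h x = Mm.out x (Mm.run h)

end Moore

/-- `cyc-Parity`: the maximal label of the (nonempty) finite sequence is even. -/
def cycParity : Set (List ℕ) := { l | ∃ m ∈ l, (∀ x ∈ l, x ≤ m) ∧ Even m }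

/-- `p` is the largest value occurring infinitely often in `c`. -/
def InfOftenMax (c : ℕ → ℕ) (p : ℕ) : Prop :=
  (∀ n, ∃ m, n ≤ m ∧ c m = p) ∧ ∀ q, (∀ n, ∃ m, n ≤ m ∧ c m = q) → q ≤ p

namespace StmtAux
open List

variable {A : Arena ℕ} (π : ℕ → A.V)

/-- stack of push-times -/
def idx (A : Arena ℕ) (π : ℕ → A.V) : ℕ → List ℕ
  | 0 => [0]
  | n+1 => if π (n+1) ∈ A.stackAt π n
           then (idx A π n).take ((A.stackAt π n).idxOf (π (n+1)) + 1)
           else idx A π n ++ [n+1]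

lemma stack_succ_pos {n : ℕ} (h : π (n+1) ∈ A.stackAt π n) :
    A.stackAt π (n+1) = (A.stackAt π n).take ((A.stackAt π n).idxOf (π (n+1)) + 1) := by
  simp [Arena.stackAt, Arena.step, h]

lemma stack_succ_neg {n : ℕ} (h : π (n+1) ∉ A.stackAt π n) :
    A.stackAt π (n+1) = A.stackAt π n ++ [π (n+1)] := by
  simp [Arena.stackAt, Arena.step, h]

lemma idx_succ_pos {n : ℕ} (h : π (n+1) ∈ A.stackAt π n) :
    idx A π (n+1) = (idx A π n).take ((A.stackAt π n).idxOf (π (n+1)) + 1) := by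
  simp [idx, h]

lemma idx_succ_neg {n : ℕ} (h : π (n+1) ∉ A.stackAt π n) :
    idx A π (n+1) = idx A π n ++ [n+1] := by
  simp [idx, h]

lemma cycleAt_pos {n : ℕ} (h : π (n+1) ∈ A.stackAt π n) :
    A.cycleAt π n = some ((A.stackAt π n).drop ((A.stackAt π n).idxOf (π (n+1)))) := by
  simp [Arena.cycleAt, Arena.step, h]

lemma cycleAt_neg {n : ℕ} (h : π (n+1) ∉ A.stackAt π n) :
    A.cycleAt π n = none := by
  simp [Arena.cycleAt, Arena.step, h]

structure Inv (n : ℕ) : Prop where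
  map_eq : A.stackAt π n = (idx A π n).map π
  sorted : (idx A π n).Pairwise (· < ·)
  mem_le : ∀ t ∈ idx A π n, t ≤ n
  ne : idx A π n ≠ []
  last_eq : π ((idx A π n).getLastD 0) = π n
  chain : (idx A π n).Chain' (fun a b => 1 ≤ b ∧ π a = π (b-1))
  nodupS : (A.stackAt π n).Nodup


lemma inv : ∀ n, Inv π n := by
  intro n
  induction n with
  | zero =>
    constructor <;> simp [Arena.stackAt, idx, List.Chain']
  | succ n ih =>
    obtain ⟨hmap, hsort, hle, hne, hlast, hchain, hnd⟩ := ih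
    by_cases h : π (n+1) ∈ A.stackAt π n
    · -- pop case
      have hlen : (A.stackAt π n).idxOf (π (n+1)) < (A.stackAt π n).length :=
        List.idxOf_lt_length_iff.2 h
      set i := (A.stackAt π n).idxOf (π (n+1)) with hi
      have hleni : i < (idx A π n).length := by
        simpa [hmap] using hlen
      have hs := stack_succ_pos π h
      have hx := idx_succ_pos π h
      have hmap' : A.stackAt π (n+1) = (idx A π (n+1)).map π := by
        rw [hs, hx, hmap, List.map_take]
      have htake : idx A π (n+1) = (idx A π n).take i ++ [(idx A π n)[i]] := by
        rw [hx, List.take_succ]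
        simp [← hi, List.getElem?_eq_getElem hleni]
      have hπi : π ((idx A π n)[i]'hleni) = π (n+1) := by
        have h1 : (A.stackAt π n)[i]'hlen = π (n+1) := List.getElem_idxOf hlen
        simpa [hmap] using h1
      refine ⟨hmap', ?_, ?_, ?_, ?_, ?_, ?_⟩
      · exact hsort.sublist (by rw [hx]; exact List.take_sublist _ _)
      · intro t ht
        have : t ∈ idx A π n := by
          rw [hx] at ht
          exact List.mem_of_mem_take ht
        exact le_trans (hle t this) (Nat.le_succ n)
      · rw [hx, ← List.length_pos_iff, List.length_take]
        omega
      · rw [htake, List.getLastD_concat]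
        exact hπi
      · refine hchain.prefix ?_
        rw [hx]; exact List.take_prefix _ _
      · exact hnd.sublist (by rw [hs]; exact List.take_sublist _ _)
    · -- push case
      have hs := stack_succ_neg π h
      have hx := idx_succ_neg π h
      refine ⟨?_, ?_, ?_, ?_, ?_, ?_, ?_⟩
      · rw [hs, hx, hmap, List.map_append]; rfl
      · rw [hx]
        refine List.pairwise_append.2 ⟨hsort, by simp, ?_⟩
        intro a ha b hb
        simp at hb
        subst hb
        exact Nat.lt_succ_of_le (hle a ha)
      · intro t ht
        rw [hx] at ht
        rcases List.mem_append.1 ht with h1 | h1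
        · exact le_trans (hle t h1) (Nat.le_succ n)
        · simp at h1; omega
      · rw [hx]; simp
      · rw [hx]; simp
      · rw [hx]
        show List.IsChain _ _
        rw [List.isChain_append]
        refine ⟨hchain, by simp, ?_⟩
        intro a ha b hb
        simp at hb
        subst hb
        refine ⟨Nat.le_add_left 1 n, ?_⟩
        simp only [Nat.add_sub_cancel]
        rw [← hlast]
        congr 1
        have h2 : (idx A π n).getLast? = some a := ha
        rw [List.getLastD_eq_getLast?, h2]
        rfl
      · rw [hs]
        exact List.Nodup.append hnd (by simp) (by simpa using h)

lemma mem_idx_succ {t n : ℕ} (ht : t ∈ idx A π (n+1)) : t ∈ idx A π n ∨ t = n + 1 := by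
  by_cases h : π (n+1) ∈ A.stackAt π n
  · rw [idx_succ_pos π h] at ht
    exact Or.inl (List.mem_of_mem_take ht)
  · rw [idx_succ_neg π h] at ht
    rcases List.mem_append.1 ht with h1 | h1
    · exact Or.inl h1
    · simp at h1; omega

lemma mem_idx_of_le {t n m : ℕ} (hnm : n ≤ m) (htn : t ≤ n) (ht : t ∈ idx A π m) :
    t ∈ idx A π n := by
  induction m, hnm using Nat.le_induction with
  | base => exact ht
  | succ m hm ih =>
    rcases mem_idx_succ π ht with h1 | h1
    · exact ih h1
    · omega

lemma idx_nodup (n : ℕ) : (idx A π n).Nodup :=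
  ((inv π n).sorted).imp (fun h => ne_of_lt h)

lemma cycLabels_length (l : List A.V) : (A.cycLabels l).length = l.length := by
  cases l with
  | nil => rfl
  | cons v rest => simp [Arena.cycLabels]

lemma getLastD_eq_getElem (l : List ℕ) (h : 0 < l.length) :
    l.getLastD 0 = l[l.length - 1]'(by omega) := by
  rw [List.getLastD_eq_getLast?, List.getLast?_eq_getElem?,
    List.getElem?_eq_getElem (by omega)]
  rfl

lemma cycle_spec {n : ℕ} (h : π (n+1) ∈ A.stackAt π n) :
    ∃ c, A.cycleAt π n = some c ∧
      (A.lab (π n) (π (n+1)) ∈ A.cycLabels c) ∧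
      (∀ t ∈ (idx A π n).drop ((A.stackAt π n).idxOf (π (n+1)) + 1),
          A.lab (π (t-1)) (π t) ∈ A.cycLabels c) ∧
      (∀ x ∈ A.cycLabels c, x = A.lab (π n) (π (n+1)) ∨
          ∃ t ∈ (idx A π n).drop ((A.stackAt π n).idxOf (π (n+1)) + 1),
            x = A.lab (π (t-1)) (π t)) := by
  obtain ⟨hmap, hsort, hle, hne, hlast, hchain, hnd⟩ := inv π n
  have hlen : (A.stackAt π n).idxOf (π (n+1)) < (A.stackAt π n).length :=
    List.idxOf_lt_length_iff.2 h
  set i := (A.stackAt π n).idxOf (π (n+1)) with hi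
  have hleni : i < (idx A π n).length := by
    have := (congrArg List.length hmap); simp at this; omega
  obtain ⟨t0, ts, hcons⟩ : ∃ t0 ts, (idx A π n).drop i = t0 :: ts := by
    rcases e : (idx A π n).drop i with _ | ⟨a, b⟩
    · exfalso
      have := congrArg List.length e
      simp [List.length_drop] at this
      omega
    · exact ⟨_, _, rfl⟩
  have hlength : (idx A π n).length = i + ts.length + 1 := by
    have := congrArg List.length hcons
    simp [List.length_drop] at this
    omega
  have hsd : (A.stackAt π n).drop i = π t0 :: ts.map π := by
    rw [hmap, ← List.map_drop, hcons]
    rfl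
  have hcyc : A.cycleAt π n = some (π t0 :: ts.map π) := by
    rw [cycleAt_pos π h, ← hi, hsd]
  have ht0' : (idx A π n)[i]'hleni = t0 := by
    have h2 : ((idx A π n).drop i)[0]'(by rw [hcons]; simp) = (idx A π n)[i]'hleni := by
      rw [List.getElem_drop]
      try simp
    rw [← h2]
    simp [hcons]
  have ht0 : π t0 = π (n+1) := by
    have h1 : (A.stackAt π n)[i]'hlen = π (n+1) := List.getElem_idxOf hlen
    rw [← ht0']
    simpa [hmap] using h1
  have hlast2 : π ((t0 :: ts)[ts.length]'(by simp)) = π n := by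
    have h6 : (t0 :: ts)[ts.length]'(by simp) =
        (idx A π n)[(idx A π n).length - 1]'(by omega) := by
      have h7 : ((idx A π n).drop i)[ts.length]'(by rw [hcons]; simp) =
          (idx A π n)[i + ts.length]'(by omega) := by
        rw [List.getElem_drop]
        try simp
      have h8 : ((idx A π n).drop i)[ts.length]'(by rw [hcons]; simp) =
          (t0 :: ts)[ts.length]'(by simp) := by
        simp [hcons]
      rw [← h8, h7]
      congr 1
      omega
    rw [h6, ← getLastD_eq_getElem _ (by omega)]
    exact hlast
  have hdchain : (t0 :: ts).Chain' (fun a b => 1 ≤ b ∧ π a = π (b-1)) := by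
    rw [← hcons]; exact hchain.drop i
  have hts : (idx A π n).drop (i+1) = ts := by
    have : (idx A π n).drop (i+1) = ((idx A π n).drop i).drop 1 := by
      rw [List.drop_drop]; try (congr 1; omega)
    rw [this, hcons]
    rfl
  have hmapcons : (π t0 :: ts.map π) = (t0 :: ts).map π := rfl
  refine ⟨_, hcyc, ?_, ?_, ?_⟩
  · -- closing label
    have hk : ts.length < (A.cycLabels (π t0 :: ts.map π)).length := by
      simp [cycLabels_length]
    refine List.mem_iff_getElem.2 ⟨ts.length, hk, ?_⟩
    show (List.zipWith A.lab (π t0 :: ts.map π) (ts.map π ++ [π t0]))[ts.length]'(by simp) = _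
    simp only [List.getElem_zipWith]
    congr 1
    · simp only [← List.map_cons, List.getElem_map]
      exact hlast2
    · rw [List.getElem_append_right (by simp)]
      simpa using ht0
  · -- internal labels
    intro t ht
    rw [hts] at ht
    obtain ⟨k, hk, rfl⟩ := List.mem_iff_getElem.1 ht
    have hk' : k < (A.cycLabels (π t0 :: ts.map π)).length := by
      simp [cycLabels_length]; omega
    refine List.mem_iff_getElem.2 ⟨k, hk', ?_⟩
    show (List.zipWith A.lab (π t0 :: ts.map π) (ts.map π ++ [π t0]))[k]'(by simp; omega) = _
    simp only [List.getElem_zipWith]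
    have hch := List.isChain_iff_getElem.1 hdchain k (by simp; omega)
    congr 1
    · simp only [← List.map_cons, List.getElem_map]
      have h9 : (t0 :: ts)[k+1]'(by simpa using Nat.succ_lt_succ hk) = ts[k] := by simp
      rw [h9] at hch
      exact hch.2
    · rw [List.getElem_append_left (by simpa using hk)]
      simp
  · -- upper bound
    intro x hx
    obtain ⟨k, hk, rfl⟩ := List.mem_iff_getElem.1 hx
    have hklen : k < ts.length + 1 := by simpa [cycLabels_length] using hk
    rcases Nat.lt_or_ge k ts.length with hkts | hkts
    · refine Or.inr ⟨ts[k], by rw [hts]; exact List.getElem_mem _, ?_⟩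
      show (List.zipWith A.lab (π t0 :: ts.map π) (ts.map π ++ [π t0]))[k]'(by simp; omega) = _
      simp only [List.getElem_zipWith]
      have hch := List.isChain_iff_getElem.1 hdchain k (by simp; omega)
      congr 1
      · simp only [← List.map_cons, List.getElem_map]
        have h9 : (t0 :: ts)[k+1]'(by simpa using Nat.succ_lt_succ hkts) = ts[k] := by simp
        rw [h9] at hch
        exact hch.2
      · rw [List.getElem_append_left (by simpa using hkts)]
        simp
    · have hkeq : k = ts.length := by omega
      subst hkeq
      refine Or.inl ?_
      show (List.zipWith A.lab (π t0 :: ts.map π) (ts.map π ++ [π t0]))[ts.length]'(by simp) = _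
      simp only [List.getElem_zipWith]
      congr 1
      · simp only [← List.map_cons, List.getElem_map]
        exact hlast2
      · rw [List.getElem_append_right (by simp)]
        simpa using ht0

lemma anti_aux : ∀ (b : ℕ) (f : ℕ → ℕ), (∀ m n, m ≤ n → f n ≤ f m) → f 0 ≤ b →
    ∃ k, ∀ n, k ≤ n → f n = f k := by
  intro b
  induction b with
  | zero =>
    intro f hf h0
    exact ⟨0, fun n hn => by have := hf 0 n hn; omega⟩
  | succ b ih =>
    intro f hf h0
    by_cases h : ∃ n, f n < f 0
    · obtain ⟨n, hn⟩ := h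
      obtain ⟨k, hk⟩ := ih (fun m => f (n + m)) (fun a c hac => hf _ _ (by omega))
        (by show f (n + 0) ≤ b; rw [Nat.add_zero]; omega)
      refine ⟨n + k, fun m hm => ?_⟩
      have h2 := hk (m - n) (by omega)
      rw [show n + (m - n) = m by omega] at h2
      exact h2
    · push_neg at h
      exact ⟨0, fun n hn => le_antisymm (hf 0 n hn) (h n)⟩

open Classical in
lemma exists_infOftenMax :
    ∃ p, InfOftenMax (fun j => A.lab (π j) (π (j + 1))) p := by
  set c := fun j => A.lab (π j) (π (j + 1)) with hc
  set L : Finset ℕ := Finset.image (fun pr : A.V × A.V => A.lab pr.1 pr.2) Finset.univ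
    with hL
  have hmem : ∀ j, c j ∈ L := fun j =>
    Finset.mem_image.2 ⟨(π j, π (j + 1)), Finset.mem_univ _, rfl⟩
  set S : Finset ℕ := L.filter (fun q => ∀ n, ∃ m, n ≤ m ∧ c m = q) with hS
  have hSne : S.Nonempty := by
    obtain ⟨q, hq⟩ := Finite.exists_infinite_fiber (fun j : ℕ => (⟨c j, hmem j⟩ : L))
    refine ⟨(q : ℕ), Finset.mem_filter.2 ⟨q.2, fun n => ?_⟩⟩
    have hinf : {j : ℕ | c j = (q : ℕ)}.Infinite := by
      have : ((fun j : ℕ => (⟨c j, hmem j⟩ : L)) ⁻¹' {q}).Infinite :=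
        Set.infinite_coe_iff.1 hq
      refine this.mono ?_
      intro j hj
      simp only [Set.mem_preimage, Set.mem_singleton_iff] at hj
      simpa using congrArg Subtype.val hj
    obtain ⟨m, hm, hmn⟩ := hinf.exists_gt n
    exact ⟨m, le_of_lt hmn, hm⟩
  refine ⟨S.max' hSne, ⟨(Finset.mem_filter.1 (S.max'_mem hSne)).2, ?_⟩⟩
  intro q hq
  refine Finset.le_max' S q (Finset.mem_filter.2 ⟨?_, hq⟩)
  obtain ⟨m, _, hm⟩ := hq 0
  rw [← hm]; exact hmem m

lemma exists_tail_bound {p : ℕ}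
    (hp : InfOftenMax (fun j => A.lab (π j) (π (j + 1))) p) :
    ∃ N, ∀ j, N ≤ j → A.lab (π j) (π (j + 1)) ≤ p := by
  classical
  set c := fun j => A.lab (π j) (π (j + 1)) with hc
  set L : Finset ℕ := Finset.image (fun pr : A.V × A.V => A.lab pr.1 pr.2) Finset.univ
    with hL
  have hmem : ∀ j, c j ∈ L := fun j =>
    Finset.mem_image.2 ⟨(π j, π (j + 1)), Finset.mem_univ _, rfl⟩
  set B : Finset ℕ := L.filter (fun q => p < q) with hB
  have key : ∀ q ∈ B, ∃ nq, ∀ m, nq ≤ m → c m ≠ q := by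
    intro q hq
    by_contra hcon
    push_neg at hcon
    have : ∀ n, ∃ m, n ≤ m ∧ c m = q := by
      intro n
      obtain ⟨m, hm1, hm2⟩ := hcon n
      exact ⟨m, hm1, hm2⟩
    have := hp.2 q this
    have := (Finset.mem_filter.1 hq).2
    omega
  choose! g hg using key
  refine ⟨B.sup g, fun j hj => ?_⟩
  by_contra hcon
  push_neg at hcon
  have hcB : c j ∈ B := Finset.mem_filter.2 ⟨hmem j, hcon⟩
  exact hg (c j) hcB j (le_trans (Finset.le_sup hcB) hj) rfl

lemma exists_stable (N : ℕ) : ∃ M, N ≤ M ∧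
    ∀ n, M ≤ n → ∀ t, t ≤ N → t ∈ idx A π n → t ∈ idx A π (n+1) := by
  classical
  set F : ℕ → Finset ℕ := fun n => (idx A π n).toFinset.filter (fun t => t ≤ N) with hF
  have hsub : ∀ n, N ≤ n → F (n+1) ⊆ F n := by
    intro n hn t ht
    obtain ⟨ht1, ht2⟩ := Finset.mem_filter.1 ht
    refine Finset.mem_filter.2 ⟨?_, ht2⟩
    rw [List.mem_toFinset] at ht1 ⊢
    rcases mem_idx_succ π ht1 with h | h
    · exact h
    · omega
  have hchain : ∀ m n, N ≤ n → n ≤ m → F m ⊆ F n := by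
    intro m
    induction m with
    | zero =>
      intro n h1 h2
      have : n = 0 := by omega
      subst this; exact subset_rfl
    | succ m ih =>
      intro n h1 h2
      rcases Nat.lt_or_ge n (m+1) with h3 | h3
      · exact (hsub m (by omega)).trans (ih n h1 (by omega))
      · have : n = m + 1 := by omega
        subst this; exact subset_rfl
  obtain ⟨k, hk⟩ := anti_aux ((F N).card) (fun k => (F (N + k)).card)
    (fun a b hab => Finset.card_le_card (hchain (N+b) (N+a) (by omega) (by omega)))
    (by simp)
  refine ⟨N + k, by omega, ?_⟩
  intro n hn t htN htn
  have h1 : F (n+1) = F n := by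
    refine Finset.eq_of_subset_of_card_le (hsub n (by omega)) ?_
    have e1 := hk (n - N) (by omega)
    have e2 := hk (n + 1 - N) (by omega)
    rw [show N + (n - N) = n by omega] at e1
    rw [show N + (n + 1 - N) = n + 1 by omega] at e2
    omega
  have h2 : t ∈ F n := Finset.mem_filter.2 ⟨List.mem_toFinset.2 htn, htN⟩
  rw [← h1] at h2
  exact List.mem_toFinset.1 (Finset.mem_filter.1 h2).1

lemma good_cycle {p N M n : ℕ}
    (hN : ∀ j, N ≤ j → A.lab (π j) (π (j + 1)) ≤ p)
    (hMN : N ≤ M)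
    (hM : ∀ n, M ≤ n → ∀ t, t ≤ N → t ∈ idx A π n → t ∈ idx A π (n+1))
    (hn : M ≤ n) (h : π (n+1) ∈ A.stackAt π n) :
    ∃ cy, A.cycleAt π n = some cy ∧ A.lab (π n) (π (n+1)) ∈ A.cycLabels cy ∧
      (∀ t ∈ (idx A π n).drop ((A.stackAt π n).idxOf (π (n+1)) + 1),
          A.lab (π (t-1)) (π t) ∈ A.cycLabels cy) ∧
      ∀ x ∈ A.cycLabels cy, x ≤ p := by
  obtain ⟨cy, hcy, hclose, hint, hup⟩ := cycle_spec π h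
  refine ⟨cy, hcy, hclose, hint, ?_⟩
  have hdropN : ∀ t ∈ (idx A π n).drop ((A.stackAt π n).idxOf (π (n+1)) + 1), N < t := by
    intro t ht
    by_contra hcon
    push_neg at hcon
    have htl : t ∈ idx A π n := List.mem_of_mem_drop ht
    have h2 : t ∈ idx A π (n+1) := hM n hn t hcon htl
    rw [idx_succ_pos π h] at h2
    have hnd : ((idx A π n).take ((A.stackAt π n).idxOf (π (n+1)) + 1) ++
        (idx A π n).drop ((A.stackAt π n).idxOf (π (n+1)) + 1)).Nodup := by
      rw [List.take_append_drop]
      exact idx_nodup π n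
    exact (List.nodup_append.1 hnd).2.2 t h2 t ht rfl
  intro x hx
  rcases hup x hx with h1 | ⟨t, ht, h2⟩
  · rw [h1]; exact hN n (by omega)
  · rw [h2]
    have h3 := hdropN t ht
    have h4 := hN (t-1) (by omega)
    rwa [show t - 1 + 1 = t by omega] at h4

open Classical in
lemma crux : ∃ p, InfOftenMax (fun j => A.lab (π j) (π (j + 1))) p ∧
    ∃ n cy, A.cycleAt π n = some cy ∧ p ∈ A.cycLabels cy ∧
      ∀ x ∈ A.cycLabels cy, x ≤ p := by
  obtain ⟨p, hp⟩ := exists_infOftenMax π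
  refine ⟨p, hp, ?_⟩
  obtain ⟨N, hN⟩ := exists_tail_bound π hp
  obtain ⟨M, hMN, hM⟩ := exists_stable π N
  by_cases hca : ∃ j, M ≤ j ∧ A.lab (π j) (π (j+1)) = p ∧ π (j+1) ∈ A.stackAt π j
  · obtain ⟨j, hj, hcj, hjs⟩ := hca
    obtain ⟨cy, hcy, hclose, _, hup⟩ := good_cycle π hN hMN hM hj hjs
    exact ⟨j, cy, hcy, by rwa [hcj] at hclose, hup⟩
  · push_neg at hca
    by_cases hpb : ∃ j, M ≤ j ∧ A.lab (π j) (π (j+1)) = p ∧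
        ∃ n, j + 1 ≤ n ∧ j + 1 ∈ idx A π n ∧ j + 1 ∉ idx A π (n+1)
    · obtain ⟨j, hj, hcj, n, hn1, hn2, hn3⟩ := hpb
      have hpop : π (n+1) ∈ A.stackAt π n := by
        by_contra hcon
        rw [idx_succ_neg π hcon] at hn3
        exact hn3 (List.mem_append.2 (Or.inl hn2))
      obtain ⟨cy, hcy, _, hint, hup⟩ := good_cycle π hN hMN hM (by omega) hpop
      have hjdrop : j + 1 ∈ (idx A π n).drop ((A.stackAt π n).idxOf (π (n+1)) + 1) := by
        rw [idx_succ_pos π hpop] at hn3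
        have hmem2 : j + 1 ∈ (idx A π n).take ((A.stackAt π n).idxOf (π (n+1)) + 1) ++
            (idx A π n).drop ((A.stackAt π n).idxOf (π (n+1)) + 1) := by
          rw [List.take_append_drop]
          exact hn2
        rcases List.mem_append.1 hmem2 with h | h
        · exact absurd h hn3
        · exact h
      have hfin := hint (j+1) hjdrop
      simp only [Nat.add_sub_cancel] at hfin
      rw [hcj] at hfin
      exact ⟨n, cy, hcy, hfin, hup⟩
    · push_neg at hpb
      exfalso
      have hpers : ∀ j, M ≤ j → A.lab (π j) (π (j+1)) = p →
          ∀ n, j + 1 ≤ n → j + 1 ∈ idx A π n := by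
        intro j hj hcj n hn
        induction n with
        | zero => omega
        | succ n ih =>
          rcases Nat.lt_or_ge n (j+1) with h1 | h1
          · have hnj : n = j := by omega
            rw [hnj, idx_succ_neg π (hca j hj hcj)]
            simp
          · have h2 := ih h1
            by_contra h3
            exact h3 (hpb j hj hcj n h1 h2)
      set P : Set ℕ := {j | M ≤ j ∧ A.lab (π j) (π (j+1)) = p} with hP
      have hPinf : P.Infinite := by
        by_contra hfin
        rw [Set.not_infinite] at hfin
        obtain ⟨b, hb⟩ := hfin.bddAbove
        obtain ⟨m, hm1, hm2⟩ := hp.1 (max M b + 1)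
        have hmP : m ∈ P := ⟨le_trans (le_trans (le_max_left M b) (by omega)) le_rfl, hm2⟩
        have h4 : m ≤ b := hb hmP
        have h5 := le_max_right M b
        omega
      obtain ⟨T, hTsub, hTcard⟩ := hPinf.exists_subset_card_eq (Fintype.card A.V + 1)
      have hTmem : ∀ j ∈ T, j + 1 ∈ idx A π (T.sup id + 1) := by
        intro j hjT
        have hjP := hTsub hjT
        refine hpers j hjP.1 hjP.2 _ ?_
        have := Finset.le_sup (f := id) hjT
        simp only [id] at this
        omega
      have hinj : (T.image (· + 1)).card = T.card :=
        Finset.card_image_of_injective _ (fun a b hab => by omega)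
      have hsub2 : T.image (· + 1) ⊆ (idx A π (T.sup id + 1)).toFinset := by
        intro t ht
        obtain ⟨j, hj, rfl⟩ := Finset.mem_image.1 ht
        exact List.mem_toFinset.2 (hTmem j hj)
      have hlen : (idx A π (T.sup id + 1)).toFinset.card ≤ Fintype.card A.V := by
        rw [List.toFinset_card_of_nodup (idx_nodup π _)]
        have hmap := (inv π (T.sup id + 1)).map_eq
        have hlen2 : (idx A π (T.sup id + 1)).length = (A.stackAt π (T.sup id + 1)).length := by
          rw [hmap]; simp
        rw [hlen2]
        exact List.Nodup.length_le_card ((inv π (T.sup id + 1)).nodupS)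
      have := Finset.card_le_card hsub2
      omega

end StmtAux

/-- the parity condition is cyc-Parity-greedy on every arena. -/
theorem stmt13 (A : Arena ℕ) (π : ℕ → A.V) (hπ : A.IsPlay π) :
    (A.ACObj cycParity π →
      ∃ p, InfOftenMax (fun j => A.lab (π j) (π (j + 1))) p ∧ Even p) ∧
    (A.ACObj cycParityᶜ π →
      ∃ p, InfOftenMax (fun j => A.lab (π j) (π (j + 1))) p ∧ Odd p) := by
  obtain ⟨p, hp, n, cy, hcy, hpmem, hble⟩ := StmtAux.crux π
  constructor
  · intro hAC
    refine ⟨p, hp, ?_⟩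
    obtain ⟨m, hm, hmax, heven⟩ := hAC n cy hcy
    have hmp : m = p := le_antisymm (hble m hm) (hmax p hpmem)
    rwa [← hmp]
  · intro hAC
    refine ⟨p, hp, ?_⟩
    have hnc := hAC n cy hcy
    rw [← Nat.not_even_iff_odd]
    intro hev
    exact hnc ⟨p, hpmem, hble, hev⟩
end

section
/- For every real ν, the ν-mean-payoff winning condition is cyc-MeanPayoff_ν-greedy on every arena: if every cycle in the cycles-decomposition of a play has average label at least ν, then limsup_{k→∞} (1/k)·Σ_{i=1}^k c_i ≥ ν for the label sequence c of the play; and if every cycle has average label strictly below ν (i.e., in the complement), the limsup average is below ν. -/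
/-- `cyc-MeanPayoff_ν`: the average of the (nonempty) finite sequence is ≥ ν. -/
def cycMP (ν : ℝ) : Set (List ℝ) := { l | l ≠ [] ∧ ν ≤ l.sum / l.length }


namespace Stmt14Aux

variable {A : Arena ℝ}

/-- Sum of labels along a path given by a list of vertices. -/
def pSum (A : Arena ℝ) (s : List A.V) : ℝ := (List.zipWith A.lab s s.tail).sum

@[simp] lemma pSum_nil : pSum A [] = 0 := rfl

@[simp] lemma pSum_single (a : A.V) : pSum A [a] = 0 := rfl

lemma pSum_cons_cons (a b : A.V) (t : List A.V) :
    pSum A (a :: b :: t) = A.lab a b + pSum A (b :: t) := by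
  simp [pSum]

lemma pSum_take_drop : ∀ (i : ℕ) (s : List A.V), i < s.length →
    pSum A s = pSum A (s.take (i + 1)) + pSum A (s.drop i)
  | 0, a :: t, _ => by simp
  | 0, [], h => by simp at h
  | i+1, [], h => by simp at h
  | i+1, [a], h => by simp at h
  | i+1, a :: b :: t, h => by
    have ih := pSum_take_drop i (b :: t) (by simpa using Nat.lt_of_succ_lt_succ h)
    rw [List.take_succ_cons] at ih
    simp only [List.take_succ_cons, List.drop_succ_cons]
    rw [pSum_cons_cons, pSum_cons_cons]
    linarith [ih]

lemma pSum_append_singleton : ∀ (s : List A.V) (hs : s ≠ []) (v : A.V),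
    pSum A (s ++ [v]) = pSum A s + A.lab (s.getLast hs) v
  | [a], _, v => by simp [pSum_cons_cons]
  | a :: b :: t, _, v => by
    have ih := pSum_append_singleton (b :: t) (by simp) v
    simp only [List.cons_append] at *
    rw [pSum_cons_cons, pSum_cons_cons, ih]
    simp only [List.getLast_cons (List.cons_ne_nil b t)]
    ring

lemma pSum_abs_le (B : ℝ) (hB : ∀ v w : A.V, |A.lab v w| ≤ B) (hB0 : 0 ≤ B) :
    ∀ s : List A.V, |pSum A s| ≤ s.length * B
  | [] => by simp [hB0]
  | [a] => by simp [hB0]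
  | a :: b :: t => by
    have ih := pSum_abs_le B hB hB0 (b :: t)
    rw [pSum_cons_cons]
    calc |A.lab a b + pSum A (b :: t)| ≤ |A.lab a b| + |pSum A (b :: t)| := abs_add_le _ _
    _ ≤ B + (b :: t).length * B := add_le_add (hB a b) ih
    _ ≤ (a :: b :: t).length * B := by simp; ring_nf; linarith

lemma cycLabels_sum : ∀ (rest : List A.V) (v w : A.V),
    (List.zipWith A.lab (v :: rest) (rest ++ [w])).sum
      = pSum A (v :: rest) + A.lab ((v :: rest).getLast (by simp)) w
  | [], v, w => by simp [pSum]
  | b :: t, v, w => by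
    have ih := cycLabels_sum t b w
    simp only [List.cons_append, List.zipWith_cons_cons, List.sum_cons]
    rw [ih, pSum_cons_cons]
    simp only [List.getLast_cons (List.cons_ne_nil b t)]
    ring

lemma cycSum_eq (v : A.V) (rest : List A.V) :
    (A.cycLabels (v :: rest)).sum
      = pSum A (v :: rest) + A.lab ((v :: rest).getLast (by simp)) v :=
  cycLabels_sum rest v v

@[simp] lemma cycLabels_length (v : A.V) (rest : List A.V) :
    (A.cycLabels (v :: rest)).length = (v :: rest).length := by
  simp [Arena.cycLabels]


variable (π : ℕ → A.V)

lemma stack_getLast? : ∀ n, (A.stackAt π n).getLast? = some (π n)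
  | 0 => by simp [Arena.stackAt]
  | n + 1 => by
    show ((A.step (A.stackAt π n) (π (n+1))).1).getLast? = _
    unfold Arena.step
    by_cases h : π (n+1) ∈ A.stackAt π n
    · have hlt : (A.stackAt π n).idxOf (π (n+1)) < (A.stackAt π n).length :=
        List.idxOf_lt_length_iff.2 h
      simp only [h, if_true]
      rw [List.take_succ, List.getElem?_eq_getElem hlt, List.getElem_idxOf hlt]
      simp [List.getLast?_concat]
    · simp [h, List.getLast?_concat]

lemma stack_ne_nil (n : ℕ) : A.stackAt π n ≠ [] := by
  intro h
  have := stack_getLast? π n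
  rw [h] at this
  simp at this

lemma stack_getLast (n : ℕ) : (A.stackAt π n).getLast (stack_ne_nil π n) = π n := by
  have h1 := List.getLast?_eq_getLast_of_ne_nil (stack_ne_nil (A := A) π n)
  have h2 := stack_getLast? π n
  rw [h1] at h2
  exact Option.some.inj h2

lemma stack_nodup : ∀ n, (A.stackAt π n).Nodup
  | 0 => List.nodup_singleton _
  | n + 1 => by
    have ih := stack_nodup n
    show ((A.step (A.stackAt π n) (π (n+1))).1).Nodup
    unfold Arena.step
    by_cases h : π (n+1) ∈ A.stackAt π n
    · simp only [h, if_true]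
      exact ih.sublist (List.take_sublist _ _)
    · simp only [h, if_false]
      exact ih.append (List.nodup_singleton _) (by simpa using h)

lemma stack_length_le (n : ℕ) : (A.stackAt π n).length ≤ Fintype.card A.V :=
  (stack_nodup π n).length_le_card

/-- Sum of labels of the cycle output at step `m` (0 if none). -/
def cval (A : Arena ℝ) (π : ℕ → A.V) (m : ℕ) : ℝ :=
  match A.cycleAt π m with
  | some c => (A.cycLabels c).sum
  | none => 0

/-- Length of the cycle output at step `m` (0 if none). -/
def clen (A : Arena ℝ) (π : ℕ → A.V) (m : ℕ) : ℕ :=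
  match A.cycleAt π m with
  | some c => c.length
  | none => 0

lemma getLast_drop_eq {l : List A.V} {n : ℕ} (h : n < l.length) (h1 : l.drop n ≠ []) (h2 : l ≠ []) :
    (l.drop n).getLast h1 = l.getLast h2 := by
  have : l.getLast? = (l.drop n).getLast? := by
    conv_lhs => rw [← List.take_append_drop n l]
    exact List.getLast?_append_of_ne_nil _ h1
  rw [List.getLast?_eq_getLast_of_ne_nil h2, List.getLast?_eq_getLast_of_ne_nil h1] at this
  exact (Option.some.inj this).symm

lemma invariant (n : ℕ) :
    ((∑ i ∈ Finset.range n, A.lab (π i) (π (i+1)))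
      = (∑ m ∈ Finset.range n, cval A π m) + pSum A (A.stackAt π n))
    ∧ n + 1 = (∑ m ∈ Finset.range n, clen A π m) + (A.stackAt π n).length := by
  induction n with
  | zero => simp [Arena.stackAt]
  | succ n ih =>
    obtain ⟨ih1, ih2⟩ := ih
    set s := A.stackAt π n with hs
    set v := π (n + 1) with hv
    have hlast : s.getLast (stack_ne_nil π n) = π n := stack_getLast π n
    have hsn : s ≠ [] := stack_ne_nil π n
    have hstep1 : A.stackAt π (n+1) = (A.step s v).1 := rfl
    have hstep2 : A.cycleAt π n = (A.step s v).2 := rfl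
    rw [Finset.sum_range_succ, Finset.sum_range_succ, Finset.sum_range_succ, ih1]
    by_cases h : v ∈ s
    · have hlt : s.idxOf v < s.length := List.idxOf_lt_length_iff.2 h
      set i := s.idxOf v with hi
      have hcyc : A.cycleAt π n = some (s.drop i) := by
        rw [hstep2]; simp only [Arena.step, h, if_true]; rfl
      have hstack : A.stackAt π (n+1) = s.take (i + 1) := by
        rw [hstep1]; simp only [Arena.step, h, if_true]; rfl
      have hdrop : s.drop i = s[i] :: s.drop (i + 1) := List.drop_eq_getElem_cons hlt
      have hgi : s[i] = v := List.getElem_idxOf hlt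
      have hset : v :: List.drop (i+1) s = List.drop i s := by rw [hdrop, hgi]
      have hdn : List.drop i s ≠ [] := by rw [← hset]; exact List.cons_ne_nil _ _
      constructor
      · have hlast2 : ∀ hne, (v :: List.drop (i+1) s).getLast hne = π n := by
          intro hne
          have hq : (v :: List.drop (i+1) s).getLast? = some (π n) := by
            rw [hset, List.getLast?_eq_getLast_of_ne_nil hdn,
              getLast_drop_eq hlt hdn hsn, hlast]
          rw [List.getLast?_eq_getLast_of_ne_nil hne] at hq
          exact Option.some.inj hq
        have hcval : cval A π n = pSum A (s.drop i) + A.lab (π n) v := by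
          rw [cval, hcyc]
          simp only
          rw [hdrop, hgi, cycSum_eq, hlast2, hset]
        have hsplit : pSum A s = pSum A (s.take (i+1)) + pSum A (s.drop i) :=
          pSum_take_drop i s hlt
        rw [hstack, hcval, hsplit]
        ring
      · have hclen : clen A π n = s.length - i := by
          rw [clen, hcyc]; simp
        rw [hstack, hclen, List.length_take]
        omega
    · have hcyc : A.cycleAt π n = none := by
        rw [hstep2]; simp only [Arena.step, h, if_false]
      have hstack : A.stackAt π (n+1) = s ++ [v] := by
        rw [hstep1]; simp only [Arena.step, h, if_false]
      have hcval : cval A π n = 0 := by rw [cval, hcyc]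
      have hclen : clen A π n = 0 := by rw [clen, hcyc]
      rw [hstack, hcval, hclen, pSum_append_singleton s hsn v, hlast]
      constructor
      · ring
      · simp; omega


lemma cycle_facts {m : ℕ} {c : List A.V} (h : A.cycleAt π m = some c) :
    c ≠ [] ∧ c.Nodup := by
  rw [Arena.cycleAt] at h
  unfold Arena.step at h
  by_cases hm : π (m+1) ∈ A.stackAt π m
  · simp only [hm, if_true] at h
    obtain rfl : (A.stackAt π m).drop ((A.stackAt π m).idxOf (π (m+1))) = c :=
      Option.some.inj h
    have hlt : (A.stackAt π m).idxOf (π (m+1)) < (A.stackAt π m).length :=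
      List.idxOf_lt_length_iff.2 hm
    refine ⟨?_, (stack_nodup π m).sublist (List.drop_sublist _ _)⟩
    apply List.ne_nil_of_length_pos
    rw [List.length_drop]
    omega
  · simp only [hm, if_false] at h
    exact absurd h (by simp)

lemma sum_bound_ge (B : ℝ) (hB : ∀ v w : A.V, |A.lab v w| ≤ B) (hB0 : 0 ≤ B) (μ : ℝ)
    (hcyc : ∀ m c, A.cycleAt π m = some c → μ * c.length ≤ (A.cycLabels c).sum) (k : ℕ) :
    μ * k - (|μ| * (Fintype.card A.V) + (Fintype.card A.V) * B)
      ≤ ∑ i ∈ Finset.range k, A.lab (π i) (π (i + 1)) := by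
  obtain ⟨h1, h2⟩ := invariant π k
  set N := Fintype.card A.V with hN
  set L := (A.stackAt π k).length with hL
  have hL1 : 1 ≤ L := List.length_pos_iff.2 (stack_ne_nil π k)
  have hLN : L ≤ N := stack_length_le π k
  have hL1' : (1:ℝ) ≤ (L:ℝ) := by exact_mod_cast hL1
  have hLN' : ((L:ℝ) - 1) ≤ (N:ℝ) := by
    have : (L:ℝ) ≤ N := by exact_mod_cast hLN
    linarith
  have hsum : μ * (∑ m ∈ Finset.range k, (clen A π m : ℝ))
      ≤ ∑ m ∈ Finset.range k, cval A π m := by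
    rw [Finset.mul_sum]
    refine Finset.sum_le_sum fun m _ => ?_
    unfold cval clen
    cases hc : A.cycleAt π m with
    | none => simp
    | some c => exact hcyc m c hc
  have hcast : (∑ m ∈ Finset.range k, (clen A π m : ℝ)) = (k : ℝ) + 1 - L := by
    have h2' : ((k + 1 : ℕ) : ℝ)
        = ((∑ m ∈ Finset.range k, clen A π m + L : ℕ) : ℝ) := by exact_mod_cast congrArg (Nat.cast : ℕ → ℝ) h2
    push_cast at h2'
    linarith
  have hp : |pSum A (A.stackAt π k)| ≤ (N:ℝ) * B := by
    refine le_trans (pSum_abs_le B hB hB0 _) ?_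
    have : ((A.stackAt π k).length : ℝ) ≤ (N:ℝ) := by exact_mod_cast hLN
    nlinarith
  have hp' := abs_le.1 hp
  have p1 : μ * ((L:ℝ) - 1) ≤ |μ| * ((L:ℝ) - 1) :=
    mul_le_mul_of_nonneg_right (le_abs_self μ) (by linarith)
  have p2 : |μ| * ((L:ℝ) - 1) ≤ |μ| * (N:ℝ) :=
    mul_le_mul_of_nonneg_left hLN' (abs_nonneg μ)
  have expand : μ * ((k:ℝ) + 1 - L) = μ * k - μ * ((L:ℝ) - 1) := by ring
  rw [hcast] at hsum
  rw [h1]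
  linarith

lemma sum_bound_le (B : ℝ) (hB : ∀ v w : A.V, |A.lab v w| ≤ B) (hB0 : 0 ≤ B) (μ : ℝ)
    (hcyc : ∀ m c, A.cycleAt π m = some c → (A.cycLabels c).sum ≤ μ * c.length) (k : ℕ) :
    (∑ i ∈ Finset.range k, A.lab (π i) (π (i + 1)))
      ≤ μ * k + (|μ| * (Fintype.card A.V) + (Fintype.card A.V) * B) := by
  obtain ⟨h1, h2⟩ := invariant π k
  set N := Fintype.card A.V with hN
  set L := (A.stackAt π k).length with hL
  have hL1 : 1 ≤ L := List.length_pos_iff.2 (stack_ne_nil π k)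
  have hLN : L ≤ N := stack_length_le π k
  have hL1' : (1:ℝ) ≤ (L:ℝ) := by exact_mod_cast hL1
  have hLN' : ((L:ℝ) - 1) ≤ (N:ℝ) := by
    have : (L:ℝ) ≤ N := by exact_mod_cast hLN
    linarith
  have hsum : (∑ m ∈ Finset.range k, cval A π m)
      ≤ μ * (∑ m ∈ Finset.range k, (clen A π m : ℝ)) := by
    rw [Finset.mul_sum]
    refine Finset.sum_le_sum fun m _ => ?_
    unfold cval clen
    cases hc : A.cycleAt π m with
    | none => simp
    | some c => exact hcyc m c hc
  have hcast : (∑ m ∈ Finset.range k, (clen A π m : ℝ)) = (k : ℝ) + 1 - L := by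
    have h2' : ((k + 1 : ℕ) : ℝ)
        = ((∑ m ∈ Finset.range k, clen A π m + L : ℕ) : ℝ) := by exact_mod_cast congrArg (Nat.cast : ℕ → ℝ) h2
    push_cast at h2'
    linarith
  have hp : |pSum A (A.stackAt π k)| ≤ (N:ℝ) * B := by
    refine le_trans (pSum_abs_le B hB hB0 _) ?_
    have : ((A.stackAt π k).length : ℝ) ≤ (N:ℝ) := by exact_mod_cast hLN
    nlinarith
  have hp' := abs_le.1 hp
  have p1 : -(|μ| * ((L:ℝ) - 1)) ≤ μ * ((L:ℝ) - 1) := by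
    have := mul_le_mul_of_nonneg_right (neg_abs_le μ) (show (0:ℝ) ≤ (L:ℝ) - 1 by linarith)
    linarith [this]
  have p2 : |μ| * ((L:ℝ) - 1) ≤ |μ| * (N:ℝ) :=
    mul_le_mul_of_nonneg_left hLN' (abs_nonneg μ)
  have expand : μ * ((k:ℝ) + 1 - L) = μ * k - μ * ((L:ℝ) - 1) := by ring
  rw [hcast] at hsum
  rw [h1]
  linarith

end Stmt14Aux


open Stmt14Aux Filter in
/-- the ν-mean-payoff condition is cyc-MeanPayoff_ν-greedy on
every arena. -/
theorem stmt14 (ν : ℝ) (A : Arena ℝ) (π : ℕ → A.V) (hπ : A.IsPlay π) :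
    (A.ACObj (cycMP ν) π →
      ν ≤ Filter.limsup
        (fun k => (∑ i ∈ Finset.range k, A.lab (π i) (π (i + 1))) / k)
        Filter.atTop) ∧
    (A.ACObj (cycMP ν)ᶜ π →
      Filter.limsup
        (fun k => (∑ i ∈ Finset.range k, A.lab (π i) (π (i + 1))) / k)
        Filter.atTop < ν) := by
  classical
  set N := Fintype.card A.V with hN
  -- a bound on the labels
  obtain ⟨B, hBmem⟩ : ∃ B, ∀ y ∈ Set.range (fun p : A.V × A.V => |A.lab p.1 p.2|), y ≤ B := by
    obtain ⟨B, hB⟩ := (Set.finite_range (fun p : A.V × A.V => |A.lab p.1 p.2|)).bddAbove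
    exact ⟨B, fun y hy => hB hy⟩
  have hB : ∀ v w : A.V, |A.lab v w| ≤ B := fun v w => hBmem _ ⟨(v, w), rfl⟩
  have hB0 : 0 ≤ B := le_trans (abs_nonneg _) (hB (π 0) (π 0))
  set f : ℕ → ℝ := fun k => (∑ i ∈ Finset.range k, A.lab (π i) (π (i + 1))) / k with hf
  have hEabs : ∀ k : ℕ, |∑ i ∈ Finset.range k, A.lab (π i) (π (i + 1))| ≤ k * B := by
    intro k
    calc |∑ i ∈ Finset.range k, A.lab (π i) (π (i + 1))|
        ≤ ∑ i ∈ Finset.range k, |A.lab (π i) (π (i + 1))| := Finset.abs_sum_le_sum_abs _ _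
      _ ≤ (Finset.range k).card • B :=
          Finset.sum_le_card_nsmul _ _ B (fun i _ => hB _ _)
      _ = k * B := by simp [nsmul_eq_mul]
  have hfB : ∀ k : ℕ, |f k| ≤ B := by
    intro k
    rcases Nat.eq_zero_or_pos k with rfl | hk
    · simp [hf, hB0]
    · have hk' : (0:ℝ) < k := by exact_mod_cast hk
      rw [hf]
      simp only
      rw [abs_div, abs_of_pos hk', div_le_iff₀ hk']
      calc |∑ i ∈ Finset.range k, A.lab (π i) (π (i + 1))| ≤ k * B := hEabs k
        _ = B * k := by ring
  have hfub : IsBoundedUnder (· ≤ ·) atTop f :=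
    isBoundedUnder_of ⟨B, fun k => (abs_le.1 (hfB k)).2⟩
  have hflb : IsBoundedUnder (· ≥ ·) atTop f :=
    isBoundedUnder_of ⟨-B, fun k => (abs_le.1 (hfB k)).1⟩
  constructor
  · -- all cycles have average ≥ ν
    intro hAC
    set C := |ν| * (N:ℝ) + (N:ℝ) * B with hC
    have hcyc : ∀ m c, A.cycleAt π m = some c → ν * c.length ≤ (A.cycLabels c).sum := by
      intro m c hc
      obtain ⟨hne, -⟩ := cycle_facts π hc
      obtain ⟨-, havg⟩ := hAC m c hc
      have hlen : (A.cycLabels c).length = c.length := by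
        cases c with
        | nil => exact absurd rfl hne
        | cons v rest => exact cycLabels_length v rest
      have hpos : (0:ℝ) < (c.length : ℝ) := by
        exact_mod_cast List.length_pos_iff.2 hne
      rw [hlen] at havg
      rw [le_div_iff₀ hpos] at havg
      linarith
    have hkey := sum_bound_ge π B hB hB0 ν hcyc
    have hge : ∀ k : ℕ, 1 ≤ k → ν - C / k ≤ f k := by
      intro k hk
      have hk' : (0:ℝ) < k := by exact_mod_cast hk
      rw [hf]
      simp only
      rw [le_div_iff₀ hk']
      have := hkey k
      have expand : (ν - C / k) * k = ν * k - C := by field_simp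
      rw [expand]
      exact this
    have htend : Tendsto (fun k : ℕ => ν - C / k) atTop (nhds ν) := by
      have := (tendsto_const_nhds (x := ν) (f := atTop (α := ℕ))).sub
        (tendsto_const_div_atTop_nhds_zero_nat C)
      simpa using this
    calc ν = limsup (fun k : ℕ => ν - C / k) atTop := htend.limsup_eq.symm
      _ ≤ limsup f atTop := by
          refine limsup_le_limsup ?_ htend.isCoboundedUnder_le hfub
          filter_upwards [eventually_ge_atTop 1] with k hk using hge k hk
  · -- all cycles have average < ν
    intro hAC
    have hfin : {c : List A.V | ∃ m, A.cycleAt π m = some c}.Finite := by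
      refine Set.Finite.subset (List.finite_length_le A.V N) ?_
      rintro c ⟨m, hm⟩
      exact (cycle_facts π hm).2.length_le_card
    set F := hfin.toFinset with hF
    set G : Finset ℝ :=
      insert (1:ℝ) (F.image fun c => ν - (A.cycLabels c).sum / c.length) with hG
    have hGne : G.Nonempty := ⟨1, Finset.mem_insert_self _ _⟩
    set δ := G.min' hGne with hδ
    have hocc : ∀ m c, A.cycleAt π m = some c →
        c ≠ [] ∧ (A.cycLabels c).sum / c.length < ν := by
      intro m c hc
      obtain ⟨hne, -⟩ := cycle_facts π hc
      refine ⟨hne, ?_⟩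
      have hmem := hAC m c hc
      simp only [cycMP, Set.mem_compl_iff, Set.mem_setOf_eq, not_and, not_le] at hmem
      have hlen : (A.cycLabels c).length = c.length := by
        cases c with
        | nil => exact absurd rfl hne
        | cons v rest => exact cycLabels_length v rest
      have hlne : A.cycLabels c ≠ [] := by
        apply List.ne_nil_of_length_pos
        rw [hlen]
        exact List.length_pos_iff.2 hne
      have := hmem hlne
      rwa [hlen] at this
    have hδpos : 0 < δ := by
      rw [hδ]
      rw [Finset.lt_min'_iff]
      intro b hb
      rw [hG, Finset.mem_insert] at hb
      rcases hb with rfl | hb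
      · norm_num
      · obtain ⟨c, hcF, rfl⟩ := Finset.mem_image.1 hb
        rw [hF, Set.Finite.mem_toFinset] at hcF
        obtain ⟨m, hm⟩ := hcF
        have := (hocc m c hm).2
        linarith
    have hcyc : ∀ m c, A.cycleAt π m = some c →
        (A.cycLabels c).sum ≤ (ν - δ) * c.length := by
      intro m c hc
      obtain ⟨hne, hlt⟩ := hocc m c hc
      have hpos : (0:ℝ) < (c.length : ℝ) := by
        exact_mod_cast List.length_pos_iff.2 hne
      have hδle : δ ≤ ν - (A.cycLabels c).sum / c.length := by
        apply Finset.min'_le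
        rw [hG]
        refine Finset.mem_insert_of_mem (Finset.mem_image.2 ⟨c, ?_, rfl⟩)
        rw [hF, Set.Finite.mem_toFinset]
        exact ⟨m, hc⟩
      have : (A.cycLabels c).sum / c.length ≤ ν - δ := by linarith
      rw [div_le_iff₀ hpos] at this
      linarith
    set C := |ν - δ| * (N:ℝ) + (N:ℝ) * B with hC
    have hkey := sum_bound_le π B hB hB0 (ν - δ) hcyc
    have hle : ∀ k : ℕ, 1 ≤ k → f k ≤ (ν - δ) + C / k := by
      intro k hk
      have hk' : (0:ℝ) < k := by exact_mod_cast hk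
      rw [hf]
      simp only
      rw [div_le_iff₀ hk']
      have := hkey k
      have expand : ((ν - δ) + C / k) * k = (ν - δ) * k + C := by field_simp
      rw [expand]
      exact this
    have htend : Tendsto (fun k : ℕ => (ν - δ) + C / k) atTop (nhds (ν - δ)) := by
      have := (tendsto_const_nhds (x := ν - δ) (f := atTop (α := ℕ))).add
        (tendsto_const_div_atTop_nhds_zero_nat C)
      simpa using this
    have : limsup f atTop ≤ ν - δ := by
      calc limsup f atTop ≤ limsup (fun k : ℕ => (ν - δ) + C / k) atTop := by
            refine limsup_le_limsup ?_ hflb.isCoboundedUnder_le htend.isBoundedUnder_le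
            filter_upwards [eventually_ge_atTop 1] with k hk using hle k hk
        _ = ν - δ := htend.limsup_eq
    linarith
end

section
/- The energy winning condition with initial credit W·(|V|−1) is cyc-Energy-greedy on every arena with integer weights of absolute value at most W: if every cycle in the cycles-decomposition of a play has non-negative label sum, then W·(|V|−1) + c_1 + ... + c_k ≥ 0 for all k; and if every cycle has negative label sum, then the partial sums r + c_1 + ... + c_k drop below 0 eventually for every initial credit r. -/
/-- `cyc-Energy`: the finite sequence has non-negative sum. -/
def cycEnergy : Set (List ℤ) := { l | 0 ≤ l.sum }

namespace Stmt15
open Arena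

variable {A : Arena ℤ}

/-- Sum of labels along a path (list of vertices). -/
def pS (A : Arena ℤ) : List A.V → ℤ
  | [] => 0
  | [_] => 0
  | a :: b :: t => A.lab a b + pS A (b :: t)

@[simp] lemma pS_nil : pS A [] = 0 := rfl

@[simp] lemma pS_single (a : A.V) : pS A [a] = 0 := rfl

lemma pS_cons_cons (a b : A.V) (t : List A.V) :
    pS A (a :: b :: t) = A.lab a b + pS A (b :: t) := rfl

lemma pS_append_last : ∀ (s : List A.V) (v w : A.V), s.getLast? = some w →
    pS A (s ++ [v]) = pS A s + A.lab w v := by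
  intro s
  induction s with
  | nil => intro v w h; simp at h
  | cons a t ih =>
    intro v w h
    cases t with
    | nil => simp at h; subst h; simp [pS]
    | cons b u =>
      rw [List.getLast?_cons_cons] at h
      have := ih v w h
      simp only [List.cons_append, pS_cons_cons] at *
      rw [this]; ring

lemma pS_split : ∀ (t : List A.V) (v : A.V) (u : List A.V),
    pS A (t ++ v :: u) = pS A (t ++ [v]) + pS A (v :: u) := by
  intro t
  induction t with
  | nil => intro v u; simp [pS]
  | cons a t ih =>
    intro v u
    cases t with
    | nil => simp [pS_cons_cons]
    | cons b s =>
      simp only [List.cons_append, pS_cons_cons] at *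
      rw [ih]; ring

lemma zip_sum : ∀ (t : List A.V) (w v : A.V),
    (List.zipWith A.lab (w :: t) (t ++ [v])).sum
      = pS A (w :: t) + A.lab ((w :: t).getLast (by simp)) v := by
  intro t
  induction t with
  | nil => intro w v; simp [pS]
  | cons x t ih =>
    intro w v
    simp only [List.cons_append, List.zipWith_cons_cons, List.sum_cons]
    rw [ih x v]
    have : (w :: x :: t).getLast (by simp) = (x :: t).getLast (by simp) := by
      simp [List.getLast_cons]
    rw [this, pS_cons_cons]; ring

lemma cycSum (v : A.V) (rest : List A.V) :
    (A.cycLabels (v :: rest)).sum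
      = pS A (v :: rest) + A.lab ((v :: rest).getLast (by simp)) v := by
  rw [Arena.cycLabels]; exact zip_sum rest v v

lemma pS_bound (W : ℕ) (hW : ∀ v w, A.E v w → |A.lab v w| ≤ (W : ℤ)) :
    ∀ (t : List A.V) (a : A.V), List.Chain' A.E (a :: t) →
      |pS A (a :: t)| ≤ (W : ℤ) * t.length := by
  intro t
  induction t with
  | nil => intro a _; simp [pS]
  | cons b t ih =>
    intro a hc
    simp only [List.Chain', List.isChain_cons_cons] at hc
    have h1 := hW a b hc.1
    have h2 := ih b hc.2
    rw [pS_cons_cons]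
    calc |A.lab a b + pS A (b :: t)| ≤ |A.lab a b| + |pS A (b :: t)| := abs_add_le _ _
      _ ≤ (W : ℤ) + (W : ℤ) * t.length := add_le_add h1 h2
      _ = (W : ℤ) * (t.length + 1) := by ring
      _ = (W : ℤ) * (b :: t).length := by simp
      _ = _ := by norm_num

/-- value of an output cycle (0 if none) -/
def cval (A : Arena ℤ) (o : Option (List A.V)) : ℤ :=
  (o.map (fun c => (A.cycLabels c).sum)).getD 0

def clen {A : Arena ℤ} (o : Option (List A.V)) : ℕ :=
  (o.map List.length).getD 0

def ccnt {A : Arena ℤ} (o : Option (List A.V)) : ℕ :=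
  if o.isSome then 1 else 0

/-- Main stack invariant. -/
lemma inv (π : ℕ → A.V) (hπ : A.IsPlay π) : ∀ k : ℕ,
    (A.stackAt π k).getLast? = some (π k) ∧
    (A.stackAt π k).Nodup ∧
    List.Chain' A.E (A.stackAt π k) ∧
    (∑ i ∈ Finset.range k, A.lab (π i) (π (i + 1)))
      = pS A (A.stackAt π k) + ∑ m ∈ Finset.range k, cval A (A.cycleAt π m) ∧
    k + 1 = (A.stackAt π k).length + ∑ m ∈ Finset.range k, clen (A.cycleAt π m) := by
  intro k
  induction k with
  | zero => refine ⟨rfl, by simp [Arena.stackAt], by simp [Arena.stackAt, List.Chain'], by simp [Arena.stackAt, pS], by simp [Arena.stackAt]⟩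
  | succ k ih =>
    obtain ⟨hlast, hnd, hch, hsum, hlen⟩ := ih
    set s := A.stackAt π k with hs
    have hE : A.E (π k) (π (k + 1)) := hπ k
    set v := π (k + 1) with hv
    have hstep : A.stackAt π (k + 1) = (A.step s v).1 := rfl
    have hcyc : A.cycleAt π k = (A.step s v).2 := rfl
    by_cases hmem : v ∈ s
    · -- pop case
      set i := s.idxOf v with hi
      have hilt : i < s.length := List.idxOf_lt_length_iff.2 hmem
      have hgi : s[i]'hilt = v := List.getElem_idxOf hilt
      have hstep1 : (A.step s v).1 = s.take (i + 1) := by rw [Arena.step, if_pos hmem]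
      have hstep2 : (A.step s v).2 = some (s.drop i) := by rw [Arena.step, if_pos hmem]
      have htake : s.take (i + 1) = s.take i ++ [v] := by
        rw [List.take_succ, List.getElem?_eq_getElem hilt, hgi]; rfl
      have hdrop : s.drop i = v :: s.drop (i + 1) := by
        rw [List.drop_eq_getElem_cons hilt, hgi]
      have hsplit : s = s.take i ++ v :: s.drop (i + 1) := by
        conv_lhs => rw [← List.take_append_drop i s]
        rw [hdrop]
      have hdropne : s.drop i ≠ [] := by rw [hdrop]; simp
      have hlastd : (s.drop i).getLast? = some (π k) := by
        have h1 := List.getLast?_append_of_ne_nil (s.take i) hdropne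
        rw [List.take_append_drop] at h1
        rw [← h1, hlast]
      have hglast : (v :: s.drop (i + 1)).getLast (by simp) = π k := by
        have h2 : (v :: s.drop (i + 1)).getLast? = some (π k) := by rw [← hdrop]; exact hlastd
        rw [List.getLast?_eq_getLast (l := v :: s.drop (i + 1)) (by simp)] at h2
        exact Option.some_injective _ h2
      refine ⟨?_, ?_, ?_, ?_, ?_⟩
      · rw [hstep, hstep1, htake]; simp
      · rw [hstep, hstep1]; exact hnd.sublist (List.take_sublist _ _)
      · rw [hstep, hstep1]; exact hch.take _
      · rw [Finset.sum_range_succ, Finset.sum_range_succ, hsum, hcyc, hstep2,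
          hstep, hstep1, htake]
        have hps : pS A s = pS A (s.take i ++ [v]) + pS A (v :: s.drop (i + 1)) := by
          conv_lhs => rw [hsplit]
          exact pS_split _ _ _
        have hcv : cval A (some (s.drop i))
            = pS A (v :: s.drop (i + 1)) + A.lab (π k) v := by
          simp only [cval, Option.map_some, Option.getD_some]
          rw [hdrop, cycSum, hglast]
        rw [hps, hcv]; ring
      · rw [Finset.sum_range_succ, hcyc, hstep2, hstep, hstep1]
        have hl1 : (s.take (i + 1)).length = i + 1 := by
          rw [List.length_take]; omega
        have hl2 : clen (some (s.drop i)) = s.length - i := by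
          simp [clen]
        rw [hl1, hl2]; omega
    · -- push case
      have hstep1 : (A.step s v).1 = s ++ [v] := by rw [Arena.step, if_neg hmem]
      have hstep2 : (A.step s v).2 = none := by rw [Arena.step, if_neg hmem]
      have hsne : s ≠ [] := by intro h; rw [h] at hlast; simp at hlast
      refine ⟨?_, ?_, ?_, ?_, ?_⟩
      · rw [hstep, hstep1]; simp
      · rw [hstep, hstep1]; simp [List.nodup_append, hnd, hmem]; rintro a ha rfl; exact hmem ha
      · rw [hstep, hstep1]; unfold List.Chain'; rw [List.isChain_append]
        refine ⟨hch, List.isChain_singleton _, ?_⟩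
        intro x hx y hy
        simp at hy; subst hy
        rw [hlast] at hx; simp at hx; subst hx; exact hE
      · rw [hstep, hstep1, Finset.sum_range_succ, Finset.sum_range_succ, hsum,
          pS_append_last s v (π k) hlast, hcyc, hstep2]
        simp [cval]; ring
      · rw [hstep, hstep1, Finset.sum_range_succ, hcyc, hstep2]
        simp only [List.length_append, List.length_singleton]
        have hc0 : clen (none : Option (List A.V)) = 0 := rfl
        omega

lemma cycle_prop (π : ℕ → A.V) (hπ : A.IsPlay π) (k : ℕ) (c : List A.V)
    (h : A.cycleAt π k = some c) : c ≠ [] ∧ c.length ≤ Fintype.card A.V := by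
  obtain ⟨_, hnd, _, _, _⟩ := inv π hπ k
  set s := A.stackAt π k with hs
  have hcyc : A.cycleAt π k = (A.step s (π (k + 1))).2 := rfl
  rw [hcyc, Arena.step] at h
  by_cases hmem : π (k + 1) ∈ s
  · rw [if_pos hmem] at h
    simp only [Option.some_inj] at h
    have hilt : s.idxOf (π (k + 1)) < s.length := List.idxOf_lt_length_iff.2 hmem
    constructor
    · rw [← h]
      intro hnil
      have := congrArg List.length hnil
      rw [List.length_drop] at this
      simp at this; omega
    · rw [← h]
      exact (hnd.sublist (List.drop_sublist _ _)).length_le_card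
  · rw [if_neg hmem] at h; simp at h

lemma pS_stack_bound (W : ℕ) (hW : ∀ v w, A.E v w → |A.lab v w| ≤ (W : ℤ))
    (π : ℕ → A.V) (hπ : A.IsPlay π) (k : ℕ) :
    |pS A (A.stackAt π k)| ≤ (W : ℤ) * ((Fintype.card A.V : ℤ) - 1) := by
  obtain ⟨hlast, hnd, hch, _, _⟩ := inv π hπ k
  obtain ⟨a, t, hat⟩ : ∃ a t, A.stackAt π k = a :: t := by
    cases hsk : A.stackAt π k with
    | nil => rw [hsk] at hlast; simp at hlast
    | cons a t => exact ⟨a, t, rfl⟩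
  rw [hat] at hch hnd ⊢
  have hb := pS_bound W hW t a hch
  have hlenle : (a :: t).length ≤ Fintype.card A.V := hnd.length_le_card
  have ht : (t.length : ℤ) ≤ (Fintype.card A.V : ℤ) - 1 := by
    simp only [List.length_cons] at hlenle
    have : (t.length + 1 : ℤ) ≤ (Fintype.card A.V : ℤ) := by exact_mod_cast hlenle
    linarith
  calc |pS A (a :: t)| ≤ (W : ℤ) * t.length := hb
    _ ≤ (W : ℤ) * ((Fintype.card A.V : ℤ) - 1) := by
        apply mul_le_mul_of_nonneg_left ht (by positivity)

lemma stack_len_ge (π : ℕ → A.V) (hπ : A.IsPlay π) (k : ℕ) :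
    1 ≤ (A.stackAt π k).length ∧ (A.stackAt π k).length ≤ Fintype.card A.V := by
  obtain ⟨hlast, hnd, _, _, _⟩ := inv π hπ k
  constructor
  · cases hsk : A.stackAt π k with
    | nil => rw [hsk] at hlast; simp at hlast
    | cons a t => simp
  · exact hnd.length_le_card

end Stmt15

/-- the energy condition with initial credit W·(|V|−1) is
cyc-Energy-greedy on every arena with weights of absolute value ≤ W. -/




theorem stmt15 (A : Arena ℤ) (W : ℕ)
    (hW : ∀ v w, A.E v w → |A.lab v w| ≤ (W : ℤ))
    (π : ℕ → A.V) (hπ : A.IsPlay π) :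
    (A.ACObj cycEnergy π → ∀ k,
      0 ≤ (W : ℤ) * ((Fintype.card A.V : ℤ) - 1) +
        ∑ i ∈ Finset.range k, A.lab (π i) (π (i + 1))) ∧
    (A.ACObj cycEnergyᶜ π → ∀ r : ℤ, ∃ k,
      r + ∑ i ∈ Finset.range k, A.lab (π i) (π (i + 1)) < 0) := by
  constructor
  · intro hAC k
    obtain ⟨hlast, hnd, hch, hsum, _⟩ := Stmt15.inv π hπ k
    rw [hsum]
    have hcv : 0 ≤ ∑ m ∈ Finset.range k, Stmt15.cval A (A.cycleAt π m) := by
      apply Finset.sum_nonneg; intro m _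
      cases hc : A.cycleAt π m with
      | none => simp [Stmt15.cval]
      | some c =>
        have := hAC m c hc
        simpa [Stmt15.cval, cycEnergy] using this
    have hb := Stmt15.pS_stack_bound W hW π hπ k
    have := neg_abs_le (Stmt15.pS A (A.stackAt π k))
    linarith
  · intro hAC r
    set z : ℤ := r + (W : ℤ) * ((Fintype.card A.V : ℤ) - 1) with hz
    set N : ℕ := z.toNat + 1 with hN
    set VC : ℕ := Fintype.card A.V with hVC
    have hV : 1 ≤ VC := Fintype.card_pos_iff.2 ⟨π 0⟩
    refine ⟨VC * (N + 1), ?_⟩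
    set k := VC * (N + 1) with hk
    obtain ⟨hlast, hnd, hch, hsum, hlen⟩ := Stmt15.inv π hπ k
    set cnt := ∑ m ∈ Finset.range k, Stmt15.ccnt (A.cycleAt π m) with hcnt
    have hcv : ∑ m ∈ Finset.range k, Stmt15.cval A (A.cycleAt π m)
        ≤ ∑ m ∈ Finset.range k, -(Stmt15.ccnt (A.cycleAt π m) : ℤ) := by
      apply Finset.sum_le_sum; intro m _
      cases hc : A.cycleAt π m with
      | none => simp [Stmt15.cval, Stmt15.ccnt]
      | some c =>
        have h1 := hAC m c hc
        simp only [cycEnergy, Set.mem_compl_iff, Set.mem_setOf_eq, not_le] at h1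
        simp only [Stmt15.cval, Stmt15.ccnt, Option.map_some, Option.getD_some,
          Option.isSome_some, if_true, Nat.cast_one]
        omega
    have hcv2 : ∑ m ∈ Finset.range k, Stmt15.cval A (A.cycleAt π m) ≤ -(cnt : ℤ) := by
      rw [hcnt]; push_cast
      simpa using hcv
    have hclen : ∑ m ∈ Finset.range k, Stmt15.clen (A.cycleAt π m) ≤ cnt * VC := by
      rw [hcnt, Finset.sum_mul]
      apply Finset.sum_le_sum; intro m _
      cases hc : A.cycleAt π m with
      | none => simp [Stmt15.clen, Stmt15.ccnt]
      | some c =>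
        have h2 := (Stmt15.cycle_prop π hπ m c hc).2
        simp only [Stmt15.clen, Stmt15.ccnt, Option.map_some, Option.getD_some,
          Option.isSome_some, if_true, one_mul]
        exact h2
    obtain ⟨hsl1, hsl2⟩ := Stmt15.stack_len_ge π hπ k
    have hkb : k + 1 ≤ VC + cnt * VC := by omega
    have hNcnt : N < cnt := by
      have h6 : VC * N < VC * cnt := by
        rw [hk] at hkb
        nlinarith
      exact Nat.lt_of_mul_lt_mul_left h6
    have hzc : z < (cnt : ℤ) := by
      have h3 : z ≤ (z.toNat : ℤ) := Int.self_le_toNat z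
      have h4 : (N : ℤ) < (cnt : ℤ) := by exact_mod_cast hNcnt
      have h5 : (N : ℤ) = (z.toNat : ℤ) + 1 := by rw [hN]; push_cast; ring
      omega
    rw [hsum]
    have hb := Stmt15.pS_stack_bound W hW π hπ k
    have hb2 := le_abs_self (Stmt15.pS A (A.stackAt π k))
    rw [hz, hVC] at hzc
    linarith
end

section
/- There exists a cycle property Y closed under cyclic permutations whose complement is not closed under concatenation, and a play whose cycles-decomposition witnesses ambiguity: the play (v1 v2 v1 v3 v2 v4)^ω has a suffix all of whose decomposition cycles have odd length, while the cycles-decomposition of the play itself has all cycles of even length. -/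
section Stmt17Aux

/-- The concrete arena: 4 vertices, all edges present, constant label 0. -/
def A0 : Arena ℕ where
  V := Fin 4
  finV := inferInstance
  decV := inferInstance
  owner := fun _ => 0
  E := fun _ _ => True
  nodead := fun v => ⟨v, trivial⟩
  lab := fun _ _ => 0

/-- The play (v1 v2 v1 v3 v2 v4)^ω. -/
def p0 : ℕ → A0.V := fun n => ![(0 : Fin 4), 1, 0, 2, 1, 3] ⟨n % 6, Nat.mod_lt _ (by norm_num)⟩

lemma p0_per (n : ℕ) : p0 (n + 6) = p0 n := by
  unfold p0
  congr 1
  exact Fin.ext (Nat.add_mod_right n 6)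

def q0 : ℕ → A0.V := A0.shift p0 1

lemma q0_per (n : ℕ) : q0 (n + 6) = q0 n := by
  show p0 (n + 6 + 1) = p0 (n + 1)
  have : n + 6 + 1 = (n + 1) + 6 := by omega
  rw [this, p0_per]

lemma stack_per (n : ℕ) : A0.stackAt p0 (n + 8) = A0.stackAt p0 (n + 2) := by
  induction n with
  | zero => decide
  | succ m ih =>
      show A0.stackAt p0 (m + 8 + 1) = A0.stackAt p0 (m + 2 + 1)
      show (A0.step (A0.stackAt p0 (m + 8)) (p0 (m + 8 + 1))).1 =
        (A0.step (A0.stackAt p0 (m + 2)) (p0 (m + 2 + 1))).1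
      rw [ih]
      have : m + 8 + 1 = (m + 2 + 1) + 6 := by omega
      rw [this, p0_per]

lemma cyc_per (n : ℕ) : A0.cycleAt p0 (n + 8) = A0.cycleAt p0 (n + 2) := by
  show (A0.step (A0.stackAt p0 (n + 8)) (p0 (n + 8 + 1))).2 =
    (A0.step (A0.stackAt p0 (n + 2)) (p0 (n + 2 + 1))).2
  rw [stack_per]
  have : n + 8 + 1 = (n + 2 + 1) + 6 := by omega
  rw [this, p0_per]

lemma cyc_mem (n : ℕ) : A0.cycleAt p0 n = none ∨ A0.cycleAt p0 n = some ([0, 1] : List (Fin 4)) ∨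
    A0.cycleAt p0 n = some ([0, 2, 1, 3] : List (Fin 4)) := by
  induction n using Nat.strong_induction_on with
  | _ n ih =>
    rcases Nat.lt_or_ge n 8 with h | h
    · interval_cases n <;> exact @of_decide_eq_true _ (@instDecidableOr _ _ (decEq (α := Option (List A0.V)) _ _) (@instDecidableOr _ _ (decEq (α := Option (List A0.V)) _ _) (decEq (α := Option (List A0.V)) _ _))) rfl
    · obtain ⟨m, rfl⟩ : ∃ m, n = m + 8 := ⟨n - 8, by omega⟩
      rw [cyc_per]
      exact ih (m + 2) (by omega)

lemma stack_per' (n : ℕ) : A0.stackAt q0 (n + 9) = A0.stackAt q0 (n + 3) := by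
  induction n with
  | zero => decide
  | succ m ih =>
      show (A0.step (A0.stackAt q0 (m + 9)) (q0 (m + 9 + 1))).1 =
        (A0.step (A0.stackAt q0 (m + 3)) (q0 (m + 3 + 1))).1
      rw [ih]
      have : m + 9 + 1 = (m + 3 + 1) + 6 := by omega
      rw [this, q0_per]

lemma cyc_per' (n : ℕ) : A0.cycleAt q0 (n + 9) = A0.cycleAt q0 (n + 3) := by
  show (A0.step (A0.stackAt q0 (n + 9)) (q0 (n + 9 + 1))).2 =
    (A0.step (A0.stackAt q0 (n + 3)) (q0 (n + 3 + 1))).2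
  rw [stack_per']
  have : n + 9 + 1 = (n + 3 + 1) + 6 := by omega
  rw [this, q0_per]

lemma cyc_mem' (n : ℕ) : A0.cycleAt q0 n = none ∨ A0.cycleAt q0 n = some ([1, 0, 2] : List (Fin 4)) ∨
    A0.cycleAt q0 n = some ([1, 3, 0] : List (Fin 4)) := by
  induction n using Nat.strong_induction_on with
  | _ n ih =>
    rcases Nat.lt_or_ge n 9 with h | h
    · interval_cases n <;> exact @of_decide_eq_true _ (@instDecidableOr _ _ (decEq (α := Option (List A0.V)) _ _) (@instDecidableOr _ _ (decEq (α := Option (List A0.V)) _ _) (decEq (α := Option (List A0.V)) _ _))) rfl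
    · obtain ⟨m, rfl⟩ : ∃ m, n = m + 9 := ⟨n - 9, by omega⟩
      rw [cyc_per']
      exact ih (m + 3) (by omega)

end Stmt17Aux

lemma evenCycles (n : ℕ) (c : List A0.V) (hc : A0.cycleAt p0 n = some c) :
    Even (A0.cycLabels c).length := by
  rcases cyc_mem n with h | h | h <;> rw [h] at hc
  · exact absurd hc (by simp)
  · injection hc with hc; subst hc; decide
  · injection hc with hc; subst hc; decide

lemma oddCycles (n : ℕ) (c : List A0.V) (hc : A0.cycleAt q0 n = some c) :
    ¬ Even (A0.cycLabels c).length := by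
  rcases cyc_mem' n with h | h | h <;> rw [h] at hc
  · exact absurd hc (by simp)
  · injection hc with hc; subst hc; decide
  · injection hc with hc; subst hc; decide

/-- there is a cycle property Y (even length) closed under
cyclic permutations whose complement is not closed under concatenation, and a
play whose own decomposition has all cycles in Y while some suffix has all
decomposition cycles in ¬Y — witnessing ambiguity. -/
theorem stmt17 :
    ∃ (Y : Set (List ℕ)), ClosedCyc Y ∧ ¬ ClosedConcat Yᶜ ∧
      ∃ (A : Arena ℕ) (π : ℕ → A.V),
        A.IsPlay π ∧ A.ACObj Y π ∧ A.EACObj Yᶜ π ∧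
        A.EACObj Y π ∧ ¬ A.Unambiguous Y := by
  have hACY : A0.ACObj {l : List ℕ | Even l.length} p0 := by
    intro n c hc
    exact evenCycles n c hc
  have hACY' : A0.ACObj {l : List ℕ | Even l.length}ᶜ (A0.shift p0 1) := by
    intro n c hc
    exact oddCycles n c hc
  refine ⟨{l : List ℕ | Even l.length}, ?_, ?_, A0, p0, ?_, hACY, ⟨1, hACY'⟩, ⟨0, hACY⟩, ?_⟩
  · intro a b h
    simp only [Set.mem_setOf_eq, List.length_cons, List.length_append] at h ⊢
    simpa using h
  · intro hC
    have h1 : [0] ∈ {l : List ℕ | Even l.length}ᶜ := by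
      simp [Set.mem_compl_iff]
    have := hC [0] [0] h1 h1
    simp [Set.mem_compl_iff] at this
  · intro j; exact trivial
  · intro hU
    exact hU p0 (fun j => trivial) ⟨⟨0, hACY⟩, ⟨1, hACY'⟩⟩
end

section
/- The cycle property cyc-GoodForEnergy is closed under cyclic permutations, and both it and its complement are closed under concatenation; consequently every arena is cyc-GoodForEnergy-unambiguous. -/
lemma getLast_eq_of_getLast? {α : Type} {l : List α} {h : l ≠ []} {a : α}
    (h2 : l.getLast? = some a) : l.getLast h = a := by
  rw [List.getLast?_eq_getLast h] at h2
  exact (Option.some_injective _ h2).symm ▸ rfl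

lemma abs_list_sum_le (L : List ℤ) (B : ℤ) (h : ∀ x ∈ L, |x| ≤ B) :
    |L.sum| ≤ L.length * B := by
  induction L with
  | nil => simp
  | cons a t ih =>
      have h1 : |a| ≤ B := h a (by simp)
      have h2 : |t.sum| ≤ t.length * B := ih fun x hx => h x (by simp [hx])
      have h3 : |a + t.sum| ≤ |a| + |t.sum| := abs_add_le _ _
      simp only [List.sum_cons, List.length_cons]
      push_cast
      nlinarith


open Classical in
lemma pigeon (h : ℕ → ℕ) (G : ℕ) (hb : ∀ n, h n ≤ G) :
    ∃ m, ∀ N, ∃ t, N ≤ t ∧ h t = m := by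
  by_contra hc
  push_neg at hc
  choose Nf hNf using hc
  set T := (Finset.range (G + 1)).sup Nf with hT
  have h1 : h T ≤ G := hb T
  have h2 : Nf (h T) ≤ T := Finset.le_sup (by simp [Finset.mem_range]; omega)
  exact hNf (h T) T h2 rfl

open Classical in
lemma recur_min (h : ℕ → ℕ) (G : ℕ) (hb : ∀ n, h n ≤ G) :
    ∃ m T, (∀ t, T ≤ t → m ≤ h t) ∧ (∀ N, ∃ t, N ≤ t ∧ h t = m) := by
  have hex : ∃ m, ∀ N, ∃ t, N ≤ t ∧ h t = m := pigeon h G hb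
  set m0 := Nat.find hex with hm0
  have hPm0 : ∀ N, ∃ t, N ≤ t ∧ h t = m0 := Nat.find_spec hex
  have hNf : ∀ m', ∃ N, m' < m0 → ∀ t, N ≤ t → h t ≠ m' := by
    intro m'
    by_cases hm' : m' < m0
    · have h3 := Nat.find_min hex hm'
      push_neg at h3
      obtain ⟨N, hN⟩ := h3
      exact ⟨N, fun _ t ht => hN t ht⟩
    · exact ⟨0, fun h => absurd h hm'⟩
  choose Nf hNf' using hNf
  refine ⟨m0, (Finset.range m0).sup Nf, ?_, hPm0⟩
  intro t ht
  by_contra hlt'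
  push_neg at hlt'
  have h2 : Nf (h t) ≤ (Finset.range m0).sup Nf := Finset.le_sup (Finset.mem_range.2 hlt')
  exact hNf' (h t) hlt' t (le_trans h2 ht) rfl

lemma recur_max (h : ℕ → ℕ) (G : ℕ) (hb : ∀ n, h n ≤ G) :
    ∃ M T, (∀ t, T ≤ t → h t ≤ M) ∧ (∀ N, ∃ t, N ≤ t ∧ h t = M) := by
  obtain ⟨m, T, h1, h2⟩ := recur_min (fun n => G - h n) G (fun n => Nat.sub_le G (h n))
  refine ⟨G - m, T, ?_, ?_⟩
  · intro t ht
    have h3 : m ≤ G - h t := h1 t ht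
    have := hb t
    omega
  · intro N
    obtain ⟨t, ht, hteq⟩ := h2 N
    have hteq' : G - h t = m := hteq
    have := hb t
    exact ⟨t, ht, by omega⟩

section Ins
variable {U : Type}

inductive InsIn (Y : Set (List U)) : List U → List U → Prop
  | refl (v : List U) : InsIn Y v v
  | ins (x c z v : List U) : InsIn Y v (x ++ z) → c ∈ Y → InsIn Y v (x ++ c ++ z)

lemma InsIn.append_letter {Y : Set (List U)} {v w : List U} (h : InsIn Y v w) (d : List U) :
    InsIn Y (v ++ d) (w ++ d) := by
  induction h with
  | refl v => exact InsIn.refl _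
  | ins x c z v hprem hc ih =>
      have := InsIn.ins x c (z ++ d) (v ++ d) (by simpa [List.append_assoc] using ih) hc
      simpa [List.append_assoc] using this

lemma InsIn.close {Y : Set (List U)} {v D w d : List U}
    (h : InsIn Y (v ++ D) w) (hY : (D ++ d) ∈ Y) : InsIn Y v (w ++ d) := by
  generalize hvD : v ++ D = vD at h
  induction h with
  | refl w =>
      subst hvD
      have := InsIn.ins v (D ++ d) [] v (by simpa using InsIn.refl v) hY
      simpa [List.append_assoc] using this
  | ins x c z vv hprem hc ih =>
      have := InsIn.ins x c (z ++ d) v (by simpa [List.append_assoc] using ih hvD) hc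
      simpa [List.append_assoc] using this

lemma rot_swap {Y : Set (List U)} (hcyc : ClosedCyc Y) :
    ∀ v w : List U, (v ++ w) ∈ Y → (w ++ v) ∈ Y := by
  intro v
  induction v with
  | nil => intro w h; simpa using h
  | cons a v' ih =>
      intro w h
      have h1 : (v' ++ (w ++ [a])) ∈ Y := by
        have := hcyc a (v' ++ w) (by simpa using h)
        simpa [List.append_assoc] using this
      have := ih (w ++ [a]) h1
      simpa [List.append_assoc] using this

lemma InsIn.total {Y : Set (List U)} (hcyc : ClosedCyc Y) (hcat : ClosedConcat Y)
    {w : List U} (h : InsIn Y [] w) (hne : w ≠ []) : w ∈ Y := by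
  generalize hv : ([] : List U) = v at h
  induction h with
  | refl v => exact absurd hv.symm hne
  | ins x c z v hprem hc ih =>
      subst hv
      by_cases hxz : x ++ z = []
      · rcases List.append_eq_nil_iff.1 hxz with ⟨hx, hz⟩
        subst hx; subst hz
        simpa using hc
      · have hxz' : (x ++ z) ∈ Y := ih hxz rfl
        have h1 : (z ++ x) ∈ Y := rot_swap hcyc x z hxz'
        have h2 : (c ++ (z ++ x)) ∈ Y := hcat _ _ hc h1
        have h3 : (x ++ (c ++ z)) ∈ Y := by
          have := rot_swap hcyc (c ++ z) x (by simpa [List.append_assoc] using h2)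
          exact this
        simpa [List.append_assoc] using h3

end Ins

namespace Arena
variable {U : Type} (A : Arena U)

def pLabs (l : List A.V) : List U := List.zipWith A.lab l l.tail

lemma pLabs_cons₂ (a b : A.V) (t : List A.V) :
    A.pLabs (a :: b :: t) = A.lab a b :: A.pLabs (b :: t) := rfl

lemma pLabs_drop (l : List A.V) (j : ℕ) : A.pLabs (l.drop j) = (A.pLabs l).drop j := by
  induction j generalizing l with
  | zero => simp
  | succ j ih =>
      cases l with
      | nil => simp [pLabs]
      | cons a t =>
          cases t with
          | nil => simp [pLabs]
          | cons b t' => rw [List.drop_succ_cons, ih, pLabs_cons₂, List.drop_succ_cons]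

lemma pLabs_take (l : List A.V) (j : ℕ) : A.pLabs (l.take (j + 1)) = (A.pLabs l).take j := by
  induction j generalizing l with
  | zero => cases l with
      | nil => simp [pLabs]
      | cons a t => simp [pLabs]
  | succ j ih =>
      cases l with
      | nil => simp [pLabs]
      | cons a t =>
          cases t with
          | nil => simp [pLabs]
          | cons b t' =>
              rw [List.take_succ_cons, List.take_succ_cons, pLabs_cons₂, pLabs_cons₂,
                List.take_succ_cons]
              congr 1
              have := ih (b :: t')
              rwa [List.take_succ_cons] at this

lemma pLabs_concat (l : List A.V) (u v : A.V) :
    A.pLabs (l ++ [u] ++ [v]) = A.pLabs (l ++ [u]) ++ [A.lab u v] := by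
  induction l with
  | nil => simp [pLabs]
  | cons a t ih =>
      cases t with
      | nil => simp [pLabs_cons₂, pLabs]
      | cons b t' =>
          simp only [List.cons_append, pLabs_cons₂] at *
          rw [ih]

lemma zip_close (rest : List A.V) (v x : A.V) :
    List.zipWith A.lab (v :: rest) (rest ++ [x])
      = A.pLabs (v :: rest) ++ [A.lab ((v :: rest).getLast (by simp)) x] := by
  induction rest generalizing v with
  | nil => simp [pLabs]
  | cons w r ih =>
      simp only [List.cons_append, List.zipWith_cons_cons]
      rw [ih w, pLabs_cons₂]
      simp [List.getLast_cons]

lemma cycLabels_eq (v : A.V) (rest : List A.V) :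
    A.cycLabels (v :: rest)
      = A.pLabs (v :: rest) ++ [A.lab ((v :: rest).getLast (by simp)) v] := by
  rw [cycLabels]; exact A.zip_close rest v v

lemma stack_shape (π : ℕ → A.V) (n : ℕ) : ∃ s', A.stackAt π n = s' ++ [π n] := by
  induction n with
  | zero => exact ⟨[], rfl⟩
  | succ n ih =>
      rw [stackAt, step]
      by_cases hv : π (n + 1) ∈ A.stackAt π n
      · simp only [hv, if_pos]
        refine ⟨(A.stackAt π n).take ((A.stackAt π n).idxOf (π (n+1))), ?_⟩
        have hlt : (A.stackAt π n).idxOf (π (n+1)) < (A.stackAt π n).length :=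
          List.idxOf_lt_length_iff.2 hv
        rw [List.take_succ]
        congr 1
        simp [List.getElem?_eq_getElem hlt, List.getElem_idxOf]
      · simp only [hv, if_neg, not_false_iff]
        exact ⟨A.stackAt π n, rfl⟩

lemma stack_ne_nil (π : ℕ → A.V) (n : ℕ) : A.stackAt π n ≠ [] := by
  obtain ⟨s', hs⟩ := A.stack_shape π n; simp [hs]

lemma stack_getLast (π : ℕ → A.V) (n : ℕ) :
    (A.stackAt π n).getLast (A.stack_ne_nil π n) = π n := by
  obtain ⟨s', hs⟩ := A.stack_shape π n
  simp [hs, List.getLast_append]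

lemma stack_nodup (π : ℕ → A.V) (n : ℕ) : (A.stackAt π n).Nodup := by
  induction n with
  | zero => simp [stackAt]
  | succ n ih =>
      rw [stackAt, step]
      by_cases hv : π (n + 1) ∈ A.stackAt π n
      · simp only [hv, if_pos]
        exact ih.sublist (List.take_sublist _ _)
      · simp only [hv, if_neg, not_false_iff]
        simp [List.nodup_append, ih, hv]
        intro a ha hEq; exact hv (hEq ▸ ha)

lemma stack_length_le (π : ℕ → A.V) (n : ℕ) :
    (A.stackAt π n).length ≤ Fintype.card A.V :=
  (A.stack_nodup π n).length_le_card

/-- the word of edge labels over the window [a, b) -/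
def wd (π : ℕ → A.V) (a b : ℕ) : List U :=
  (List.range (b - a)).map fun j => A.lab (π (a + j)) (π (a + j + 1))

lemma wd_succ (π : ℕ → A.V) {a t : ℕ} (h : a ≤ t) :
    A.wd π a (t + 1) = A.wd π a t ++ [A.lab (π t) (π (t + 1))] := by
  have h1 : t + 1 - a = (t - a) + 1 := by omega
  have h2 : a + (t - a) = t := by omega
  rw [wd, wd, h1, List.range_succ, List.map_append]
  simp only [List.map_cons, List.map_nil, h2]

lemma wd_self (π : ℕ → A.V) (a : ℕ) : A.wd π a a = [] := by simp [wd]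

lemma seg (Y : Set (List U)) (π : ℕ → A.V) (m n : ℕ) (hmn : m < n)
    (hstack : A.stackAt π n = A.stackAt π m)
    (hdip : ∀ τ, m ≤ τ → τ ≤ n → (A.stackAt π m).length ≤ (A.stackAt π τ).length)
    (hcyc : ∀ t c, A.cycleAt π t = some c → A.cycLabels c ∈ Y) :
    InsIn Y [] (A.wd π m n) := by
  obtain ⟨S', hS'⟩ := A.stack_shape π m
  have key : ∀ t, m ≤ t → t ≤ n →
      ∃ q, A.stackAt π t = S' ++ (π m) :: q ∧ InsIn Y (A.pLabs ((π m) :: q)) (A.wd π m t) := by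
    intro t ht
    induction t, ht using Nat.le_induction with
    | base =>
        intro _
        refine ⟨[], by simpa using hS', ?_⟩
        have h1 : A.pLabs [π m] = [] := rfl
        rw [h1, wd_self]
        exact InsIn.refl _
    | succ t ht ih =>
        intro htn
        obtain ⟨q, hsq, hins⟩ := ih (by omega)
        set v := π (t + 1) with hvdef
        set lam := A.lab (π t) (π (t + 1)) with hlamdef
        have hwd : A.wd π m (t + 1) = A.wd π m t ++ [lam] := A.wd_succ π ht
        have hlastq : ((π m) :: q).getLast? = some (π t) := by
          have h1 : (A.stackAt π t).getLast? = some (π t) := by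
            rw [List.getLast?_eq_getLast (A.stack_ne_nil π t), A.stack_getLast π t]
          rw [hsq, List.getLast?_append_of_ne_nil _ (by simp : (π m) :: q ≠ [])] at h1
          exact h1
        have hlast : ((π m) :: q).getLast (by simp) = π t := getLast_eq_of_getLast? hlastq
        by_cases hv : v ∈ A.stackAt π t
        · -- pop case
          have hi : (A.stackAt π t).idxOf v < (A.stackAt π t).length :=
            List.idxOf_lt_length_iff.2 hv
          set i := (A.stackAt π t).idxOf v with hidef
          have hstep1 : A.stackAt π (t + 1) = (A.stackAt π t).take (i + 1) := by
            rw [stackAt, step, if_pos hv]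
          have hstep2 : A.cycleAt π t = some ((A.stackAt π t).drop i) := by
            rw [cycleAt, step, if_pos hv]
          have hd := hdip (t + 1) (by omega) htn
          have hlen1 : (A.stackAt π (t + 1)).length = i + 1 := by
            rw [hstep1, List.length_take]; omega
          have hSlen : (A.stackAt π m).length = S'.length + 1 := by rw [hS']; simp
          have hiS : S'.length ≤ i := by omega
          set j := i - S'.length with hjdef
          have hij : i = S'.length + j := by omega
          have hlen_t : (A.stackAt π t).length = S'.length + (q.length + 1) := by
            rw [hsq]; simp
          have hjq : j ≤ q.length := by omega
          have hdrop : (A.stackAt π t).drop i = ((π m) :: q).drop j := by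
            rw [hsq, hij, List.drop_append]; simp
          have htake : (A.stackAt π t).take (i + 1) = S' ++ ((π m) :: q).take (j + 1) := by
            rw [hsq, show i + 1 = S'.length + (j + 1) by omega, List.take_append]; simp
          have hjlt : j < ((π m) :: q).length := by simp; omega
          have hvj? : ((π m) :: q)[j]? = some v := by
            have e0 : (A.stackAt π t)[i]? = some v := by
              rw [List.getElem?_eq_getElem hi, List.getElem_idxOf hi]
            rw [hsq] at e0
            rw [← e0, hij, List.getElem?_append_right (by omega : S'.length ≤ S'.length + j)]
            congr 1
            omega
          have hvj : ((π m) :: q)[j]'hjlt = v := by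
            rw [List.getElem?_eq_getElem hjlt] at hvj?
            exact Option.some_injective _ hvj?
          have hdropc : ((π m) :: q).drop j = v :: ((π m) :: q).drop (j + 1) := by
            rw [List.drop_eq_getElem_cons hjlt, hvj]
          have hdropne : ((π m) :: q).drop j ≠ [] := by
            rw [hdropc]; simp
          have hlastdrop? : (v :: ((π m) :: q).drop (j + 1)).getLast? = some (π t) := by
            rw [← hdropc]
            have h3 : ((π m) :: q).getLast? = (((π m) :: q).take j ++ ((π m) :: q).drop j).getLast? := by
              rw [List.take_append_drop]
            rw [List.getLast?_append_of_ne_nil _ hdropne] at h3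
            rw [← h3, hlastq]
          have hcycL : A.cycLabels (((π m) :: q).drop j)
              = (A.pLabs ((π m) :: q)).drop j ++ [lam] := by
            conv_lhs => rw [hdropc]
            rw [cycLabels_eq]
            rw [getLast_eq_of_getLast? hlastdrop?]
            rw [← hdropc, pLabs_drop]
          have hYc : (A.pLabs ((π m) :: q)).drop j ++ [lam] ∈ Y := by
            rw [← hcycL, ← hdrop]
            exact hcyc t _ hstep2
          refine ⟨q.take j, ?_, ?_⟩
          · rw [hstep1, htake, List.take_succ_cons]
          · rw [hwd]
            have hP : A.pLabs ((π m) :: q.take j) = (A.pLabs ((π m) :: q)).take j := by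
              have := A.pLabs_take ((π m) :: q) j
              rwa [List.take_succ_cons] at this
            rw [hP]
            refine InsIn.close ?_ hYc
            rwa [List.take_append_drop j (A.pLabs ((π m) :: q))]
        · -- push case
          have hstep1 : A.stackAt π (t + 1) = A.stackAt π t ++ [v] := by
            rw [stackAt, step, if_neg hv]
          refine ⟨q ++ [v], ?_, ?_⟩
          · rw [hstep1, hsq]; simp
          · rw [hwd]
            have hP : A.pLabs ((π m) :: (q ++ [v])) = A.pLabs ((π m) :: q) ++ [lam] := by
              have hlu : (π m) :: q = ((π m) :: q).dropLast ++ [((π m) :: q).getLast (by simp)] :=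
                (List.dropLast_append_getLast _).symm
              rw [hlast] at hlu
              calc A.pLabs ((π m) :: (q ++ [v]))
                  = A.pLabs ((((π m) :: q).dropLast ++ [π t]) ++ [v]) := by
                    rw [← hlu, List.cons_append]
                _ = A.pLabs (((π m) :: q).dropLast ++ [π t]) ++ [A.lab (π t) v] :=
                    A.pLabs_concat _ _ _
                _ = A.pLabs ((π m) :: q) ++ [lam] := by rw [← hlu]
            rw [hP]
            exact hins.append_letter [lam]
  obtain ⟨q, hsq, hins⟩ := key n (le_of_lt hmn) le_rfl
  rw [hstack, hS'] at hsq
  have hq : q = [] := by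
    have := List.append_cancel_left hsq.symm
    simpa using this
  subst hq
  have h1 : A.pLabs [π m] = [] := rfl
  rwa [h1] at hins

lemma cycLabels_pop (π : ℕ → A.V) (n : ℕ) (hv : π (n + 1) ∈ A.stackAt π n) :
    A.cycLabels ((A.stackAt π n).drop ((A.stackAt π n).idxOf (π (n + 1))))
      = (A.pLabs (A.stackAt π n)).drop ((A.stackAt π n).idxOf (π (n + 1)))
        ++ [A.lab (π n) (π (n + 1))] := by
  have hi : (A.stackAt π n).idxOf (π (n + 1)) < (A.stackAt π n).length :=
    List.idxOf_lt_length_iff.2 hv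
  set s := A.stackAt π n with hsdef
  set v := π (n + 1) with hvdef
  set i := s.idxOf v with hidef
  have hdropc : s.drop i = v :: s.drop (i + 1) := by
    rw [List.drop_eq_getElem_cons hi, List.getElem_idxOf hi]
  have hne : s.drop i ≠ [] := by rw [hdropc]; simp
  have hlast? : (v :: s.drop (i + 1)).getLast? = some (π n) := by
    rw [← hdropc]
    have h3 : s.getLast? = (s.take i ++ s.drop i).getLast? := by rw [List.take_append_drop]
    rw [List.getLast?_append_of_ne_nil _ hne] at h3
    rw [← h3, List.getLast?_eq_getLast (A.stack_ne_nil π n), A.stack_getLast π n]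
  rw [hdropc, cycLabels_eq, getLast_eq_of_getLast? hlast?, ← hdropc, pLabs_drop]

section Conservation
variable (wt : U → ℤ)

/-- weight of the cycle output at time t (0 if none) -/
def cycW (π : ℕ → A.V) (t : ℕ) : ℤ :=
  (A.cycleAt π t).elim 0 (fun c => ((A.cycLabels c).map wt).sum)

lemma cons_step (π : ℕ → A.V) (n : ℕ) :
    ((A.pLabs (A.stackAt π (n + 1))).map wt).sum + A.cycW wt π n
      = ((A.pLabs (A.stackAt π n)).map wt).sum + wt (A.lab (π n) (π (n + 1))) := by
  by_cases hv : π (n + 1) ∈ A.stackAt π n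
  · have hi : (A.stackAt π n).idxOf (π (n + 1)) < (A.stackAt π n).length :=
      List.idxOf_lt_length_iff.2 hv
    have hstep1 : A.stackAt π (n + 1)
        = (A.stackAt π n).take ((A.stackAt π n).idxOf (π (n + 1)) + 1) := by
      rw [stackAt, step, if_pos hv]
    have hstep2 : A.cycleAt π n
        = some ((A.stackAt π n).drop ((A.stackAt π n).idxOf (π (n + 1)))) := by
      rw [cycleAt, step, if_pos hv]
    rw [cycW, hstep2, Option.elim_some]
    rw [hstep1, A.cycLabels_pop π n hv]
    set i := (A.stackAt π n).idxOf (π (n + 1)) with hidef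
    rw [pLabs_take]
    have hsplit : ((A.pLabs (A.stackAt π n)).map wt).sum
        = (((A.pLabs (A.stackAt π n)).map wt).take i).sum
          + (((A.pLabs (A.stackAt π n)).map wt).drop i).sum := by
      conv_lhs => rw [← List.take_append_drop i ((A.pLabs (A.stackAt π n)).map wt)]
      rw [List.sum_append]
    rw [hsplit]
    simp only [List.map_append, List.sum_append, List.map_take, List.map_drop, List.map_cons,
      List.map_nil, List.sum_cons, List.sum_nil]
    ring
  · have hstep1 : A.stackAt π (n + 1) = A.stackAt π n ++ [π (n + 1)] := by
      rw [stackAt, step, if_neg hv]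
    have hstep2 : A.cycleAt π n = none := by rw [cycleAt, step, if_neg hv]
    rw [cycW, hstep2, Option.elim_none, hstep1]
    obtain ⟨s', hs'⟩ := A.stack_shape π n
    rw [hs', A.pLabs_concat]
    simp [List.sum_append]

lemma cons_eq (π : ℕ → A.V) (a : ℕ) :
    ∀ n, a ≤ n →
      ((A.pLabs (A.stackAt π n)).map wt).sum + ∑ t ∈ Finset.Ico a n, A.cycW wt π t
        = ((A.pLabs (A.stackAt π a)).map wt).sum + ((A.wd π a n).map wt).sum := by
  intro n hn
  induction n, hn using Nat.le_induction with
  | base => simp [wd_self]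
  | succ n hn ih =>
      rw [Finset.sum_Ico_succ_top hn, A.wd_succ π hn]
      have := A.cons_step wt π n
      simp only [List.map_append, List.sum_append, List.map_cons, List.map_nil, List.sum_cons,
        List.sum_nil] at *
      linarith

lemma pLabs_mem (l : List A.V) : ∀ u ∈ A.pLabs l, ∃ v w, u = A.lab v w := by
  induction l with
  | nil => simp [pLabs]
  | cons a t ih =>
      cases t with
      | nil => simp [pLabs]
      | cons b t' =>
          rw [pLabs_cons₂]
          intro u hu
          rw [List.mem_cons] at hu
          rcases hu with rfl | hu
          · exact ⟨a, b, rfl⟩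
          · exact ih u hu
        

lemma pW_bound (π : ℕ → A.V) (n : ℕ) (B : ℤ) (hB : ∀ v w, |wt (A.lab v w)| ≤ B) :
    |((A.pLabs (A.stackAt π n)).map wt).sum| ≤ (Fintype.card A.V : ℤ) * B := by
  have h1 : ∀ x ∈ (A.pLabs (A.stackAt π n)).map wt, |x| ≤ B := by
    intro x hx
    obtain ⟨u, hu, rfl⟩ := List.mem_map.1 hx
    obtain ⟨v, w, rfl⟩ := A.pLabs_mem _ u hu
    exact hB v w
  have h2 := abs_list_sum_le _ B h1
  have hB0 : 0 ≤ B := le_trans (abs_nonneg _) (hB (π 0) (π 0))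
  have h3 : (((A.pLabs (A.stackAt π n)).map wt).length : ℤ) ≤ (Fintype.card A.V : ℤ) := by
    have e1 : (A.pLabs (A.stackAt π n)).length ≤ (A.stackAt π n).length := by
      rw [pLabs]; simp [List.length_zipWith]
    have h4 := A.stack_length_le π n
    rw [List.length_map]
    exact_mod_cast le_trans e1 h4
  calc |((A.pLabs (A.stackAt π n)).map wt).sum|
      ≤ ((A.pLabs (A.stackAt π n)).map wt).length * B := h2
    _ ≤ (Fintype.card A.V : ℤ) * B := by
        apply mul_le_mul_of_nonneg_right h3 hB0

lemma conservation_le (π : ℕ → A.V) (B : ℤ) (hB : ∀ v w, |wt (A.lab v w)| ≤ B)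
    (hc : ∀ t c, A.cycleAt π t = some c → ((A.cycLabels c).map wt).sum ≤ 0)
    (a n : ℕ) (han : a ≤ n) :
    ((A.wd π a n).map wt).sum ≤ 2 * ((Fintype.card A.V : ℤ) * B) := by
  have h1 := A.cons_eq wt π a n han
  have h2 : ∑ t ∈ Finset.Ico a n, A.cycW wt π t ≤ 0 := by
    apply Finset.sum_nonpos
    intro t _
    rw [cycW]
    rcases h : A.cycleAt π t with _ | c
    · simp
    · simpa using hc t c h
  have h3 := A.pW_bound wt π n B hB
  have h4 := A.pW_bound wt π a B hB
  have h5 : |((A.pLabs (A.stackAt π n)).map wt).sum| ≤ (Fintype.card A.V : ℤ) * B := h3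
  rw [abs_le] at h3 h4
  linarith

end Conservation

lemma stack_take_const (π : ℕ → A.V) (L T : ℕ)
    (hT : ∀ t, T ≤ t → L ≤ (A.stackAt π t).length) :
    ∀ t, T ≤ t → (A.stackAt π t).take L = (A.stackAt π T).take L := by
  intro t ht
  induction t, ht using Nat.le_induction with
  | base => rfl
  | succ t ht ih =>
      rw [← ih]
      by_cases hv : π (t + 1) ∈ A.stackAt π t
      · have hstep1 : A.stackAt π (t + 1)
            = (A.stackAt π t).take ((A.stackAt π t).idxOf (π (t + 1)) + 1) := by
          rw [stackAt, step, if_pos hv]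
        have hlen := hT (t + 1) (by omega)
        rw [hstep1] at hlen ⊢
        rw [List.take_take]
        congr 1
        rw [List.length_take] at hlen
        omega
      · have hstep1 : A.stackAt π (t + 1) = A.stackAt π t ++ [π (t + 1)] := by
          rw [stackAt, step, if_neg hv]
        rw [hstep1, List.take_append,
          show L - (A.stackAt π t).length = 0 by have := hT t ht; omega]
        simp

lemma stack_recur (π : ℕ → A.V) :
    ∃ S T, (∀ t, T ≤ t → S.length ≤ (A.stackAt π t).length)
      ∧ (∀ N, ∃ t, N ≤ t ∧ T ≤ t ∧ A.stackAt π t = S) := by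
  obtain ⟨L, T, hmin, hocc⟩ := recur_min (fun t => (A.stackAt π t).length)
    (Fintype.card A.V) (fun t => A.stack_length_le π t)
  obtain ⟨t0, ht0, ht0len⟩ := hocc T
  have ht0len' : (A.stackAt π t0).length = L := ht0len
  refine ⟨A.stackAt π t0, T, ?_, ?_⟩
  · intro t ht
    rw [ht0len']
    exact hmin t ht
  · intro N
    obtain ⟨t, ht, htlen⟩ := hocc (max N T)
    have htlen' : (A.stackAt π t).length = L := htlen
    refine ⟨t, le_trans (le_max_left _ _) ht, le_trans (le_max_right _ _) ht, ?_⟩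
    have h1 : (A.stackAt π t).take L = (A.stackAt π T).take L :=
      A.stack_take_const π L T (fun u hu => by rw [← ht0len']; · exact ht0len' ▸ hmin u hu) t
        (le_trans (le_max_right _ _) ht)
    have h2 : (A.stackAt π t0).take L = (A.stackAt π T).take L :=
      A.stack_take_const π L T (fun u hu => ht0len' ▸ hmin u hu) t0 ht0
    rw [← htlen', List.take_length] at h1
    rw [← ht0len', List.take_length] at h2
    rw [h1, h2, htlen', ht0len']

lemma wd_shift (π : ℕ → A.V) (k a b : ℕ) :
    A.wd (A.shift π k) a b = A.wd π (a + k) (b + k) := by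
  rw [wd, wd, show b + k - (a + k) = b - a by omega]
  apply List.map_congr_left
  intro j hj
  show A.lab (π (a + j + k)) (π (a + j + 1 + k)) = _
  rw [show a + j + k = a + k + j by omega, show a + j + 1 + k = a + k + j + 1 by omega]

lemma wd_append (π : ℕ → A.V) (a b c : ℕ) (hab : a ≤ b) (hbc : b ≤ c) :
    A.wd π a c = A.wd π a b ++ A.wd π b c := by
  induction c, hbc using Nat.le_induction with
  | base => simp [wd_self]
  | succ c hbc ih =>
      rw [A.wd_succ π (le_trans hab hbc), A.wd_succ π hbc, ih, List.append_assoc]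

end Arena

/-- `cyc-GoodForEnergy`: either the sum of the second components is positive,
or it is zero and the largest first component is even. -/
def cycGFE : Set (List (ℕ × ℤ)) :=
  { l | 0 < (l.map Prod.snd).sum ∨
        ((l.map Prod.snd).sum = 0 ∧
          ∃ m ∈ l.map Prod.fst, (∀ x ∈ l.map Prod.fst, x ≤ m) ∧ Even m) }

lemma cycGFE_rot (a : ℕ × ℤ) (b : List (ℕ × ℤ)) :
    (a :: b) ∈ cycGFE ↔ (b ++ [a]) ∈ cycGFE := by
  have hsum : ((b ++ [a]).map Prod.snd).sum = ((a :: b).map Prod.snd).sum := by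
    simp [List.sum_append]; ring
  have hmem : ∀ x : ℕ, x ∈ (b ++ [a]).map Prod.fst ↔ x ∈ (a :: b).map Prod.fst := by
    intro x; simp [List.mem_append]; tauto
  constructor
  · rintro (h | ⟨hs, m, hm, hb, he⟩)
    · left; rw [hsum]; simpa using h
    · right
      exact ⟨by rw [hsum]; simpa using hs, m, (hmem m).2 hm,
        fun x hx => hb x ((hmem x).1 hx), he⟩
  · rintro (h | ⟨hs, m, hm, hb, he⟩)
    · left; rw [hsum] at h; simpa using h
    · right
      refine ⟨by rw [hsum] at hs; simpa using hs, m, (hmem m).1 hm,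
        fun x hx => hb x ((hmem x).2 hx), he⟩

lemma closedCyc_cycGFE : ClosedCyc cycGFE := fun a b h => (cycGFE_rot a b).1 h

lemma closedCyc_cycGFEc : ClosedCyc cycGFEᶜ := by
  intro a b h hc
  exact h ((cycGFE_rot a b).2 hc)

lemma closedConcat_cycGFE : ClosedConcat cycGFE := by
  rintro a b (ha | ⟨ha, m, hm, hb', he⟩) hb
  · left
    rcases hb with hb | ⟨hb, _⟩ <;> simp only [List.map_append, List.sum_append] <;> omega
  · rcases hb with hb | ⟨hb, m2, hm2, hb2, he2⟩
    · left; simp only [List.map_append, List.sum_append]; omega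
    · right
      refine ⟨by simp only [List.map_append, List.sum_append]; omega, max m m2, ?_, ?_, ?_⟩
      · rcases le_total m m2 with h | h
        · simp only [List.map_append, List.mem_append]; right
          simpa [max_eq_right h] using hm2
        · simp only [List.map_append, List.mem_append]; left
          simpa [max_eq_left h] using hm
      · intro x hx
        simp only [List.map_append, List.mem_append] at hx
        rcases hx with hx | hx
        · exact le_trans (hb' x hx) (le_max_left _ _)
        · exact le_trans (hb2 x hx) (le_max_right _ _)
      · rcases le_total m m2 with h | h
        · rwa [max_eq_right h]
        · rwa [max_eq_left h]

lemma closedConcat_cycGFEc : ClosedConcat cycGFEᶜ := by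
  intro a b ha hb
  simp only [cycGFE, Set.mem_compl_iff, Set.mem_setOf_eq, not_or, not_and] at ha hb ⊢
  obtain ⟨ha1, ha2⟩ := ha
  obtain ⟨hb1, hb2⟩ := hb
  constructor
  · simp only [List.map_append, List.sum_append]; omega
  · intro hs
    simp only [List.map_append, List.sum_append] at hs
    have hsa : (a.map Prod.snd).sum = 0 := by omega
    have hsb : (b.map Prod.snd).sum = 0 := by omega
    rintro ⟨m, hm, hbd, he⟩
    simp only [List.map_append, List.mem_append] at hm hbd
    rcases hm with hm | hm
    · exact (ha2 hsa) ⟨m, hm, fun x hx => hbd x (Or.inl hx), he⟩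
    · exact (hb2 hsb) ⟨m, hm, fun x hx => hbd x (Or.inr hx), he⟩

lemma gfe_sum {l : List (ℕ × ℤ)} (h : l ∈ cycGFE) : 0 ≤ (l.map Prod.snd).sum := by
  simp only [cycGFE, Set.mem_setOf_eq] at h
  rcases h with h | ⟨h, _⟩ <;> omega

lemma not_gfe_sum {l : List (ℕ × ℤ)} (h : l ∉ cycGFE) : (l.map Prod.snd).sum ≤ 0 := by
  by_contra hc
  push_neg at hc
  exact h (Or.inl hc)

lemma neg_map_sum (l : List (ℕ × ℤ)) :
    (l.map (fun u => -(u.2))).sum = -((l.map Prod.snd).sum) := by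
  induction l with
  | nil => simp
  | cons x t ih =>
      simp only [List.map_cons, List.sum_cons, ih]
      ring

lemma unamb_main (A : Arena (ℕ × ℤ)) (π : ℕ → A.V) (k1 k2 : ℕ)
    (H1 : ∀ n c, A.cycleAt (A.shift π k1) n = some c → A.cycLabels c ∈ cycGFE)
    (H2 : ∀ n c, A.cycleAt (A.shift π k2) n = some c → A.cycLabels c ∈ cycGFEᶜ) :
    False := by
  classical
  obtain ⟨B, hB0, hB⟩ : ∃ B : ℤ, 0 ≤ B ∧ ∀ v w : A.V, |(A.lab v w).2| ≤ B := by
    refine ⟨(((Finset.univ : Finset (A.V × A.V)).sup fun p => ((A.lab p.1 p.2).2).natAbs : ℕ) : ℤ),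
      Int.natCast_nonneg _, ?_⟩
    intro v w
    have h1 : ((A.lab v w).2).natAbs
        ≤ (Finset.univ : Finset (A.V × A.V)).sup (fun p => ((A.lab p.1 p.2).2).natAbs) :=
      Finset.le_sup (f := fun p : A.V × A.V => ((A.lab p.1 p.2).2).natAbs)
        (Finset.mem_univ (v, w))
    rw [Int.abs_eq_natAbs]
    exact_mod_cast h1
  set C : ℤ := 2 * ((Fintype.card A.V : ℤ) * B) with hC
  have hC0 : 0 ≤ C := by positivity
  have hub : ∀ a b : ℕ, a ≤ b → ((A.wd (A.shift π k2) a b).map Prod.snd).sum ≤ C := by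
    intro a b hab
    exact A.conservation_le Prod.snd (A.shift π k2) B hB
      (fun t c hc => not_gfe_sum (H2 t c hc)) a b hab
  have hlb : ∀ a b : ℕ, a ≤ b → -C ≤ ((A.wd (A.shift π k1) a b).map Prod.snd).sum := by
    intro a b hab
    have h1 := A.conservation_le (fun u => -(u.2)) (A.shift π k1) B
      (fun v w => by rw [abs_neg]; exact hB v w)
      (fun t c hc => by rw [neg_map_sum]; have := gfe_sum (H1 t c hc); omega) a b hab
    rw [neg_map_sum] at h1
    linarith
  have keyUB : ∀ a b : ℕ, k2 ≤ a + k1 → a ≤ b →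
      ((A.wd (A.shift π k1) a b).map Prod.snd).sum ≤ C := by
    intro a b hk hab
    have h1 : A.wd (A.shift π k1) a b = A.wd π (a + k1) (b + k1) := A.wd_shift π k1 a b
    have h2 : A.wd (A.shift π k2) (a + k1 - k2) (b + k1 - k2) = A.wd π (a + k1) (b + k1) := by
      rw [A.wd_shift]
      congr 1 <;> omega
    rw [h1, ← h2]
    exact hub _ _ (by omega)
  have keyLB : ∀ a b : ℕ, k1 ≤ a + k2 → a ≤ b →
      -C ≤ ((A.wd (A.shift π k2) a b).map Prod.snd).sum := by
    intro a b hk hab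
    have h1 : A.wd (A.shift π k2) a b = A.wd π (a + k2) (b + k2) := A.wd_shift π k2 a b
    have h2 : A.wd (A.shift π k1) (a + k2 - k1) (b + k2 - k1) = A.wd π (a + k2) (b + k2) := by
      rw [A.wd_shift]
      congr 1 <;> omega
    rw [h1, ← h2]
    exact hlb _ _ (by omega)
  obtain ⟨S1, T1, hT1len, hT1occ⟩ := A.stack_recur (A.shift π k1)
  obtain ⟨S2, T2, hT2len, hT2occ⟩ := A.stack_recur (A.shift π k2)
  have hwin1 : ∀ a b, T1 ≤ a → a < b → A.stackAt (A.shift π k1) a = S1 →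
      A.stackAt (A.shift π k1) b = S1 → A.wd (A.shift π k1) a b ∈ cycGFE := by
    intro a b ha hab hsa hsb
    have hseg := A.seg cycGFE (A.shift π k1) a b hab (by rw [hsa, hsb])
      (fun τ h1 h2 => by rw [hsa]; exact hT1len τ (le_trans ha h1))
      (fun t c h => H1 t c h)
    refine hseg.total closedCyc_cycGFE closedConcat_cycGFE ?_
    have hlen : (A.wd (A.shift π k1) a b).length = b - a := by simp [Arena.wd]
    intro hnil
    rw [hnil] at hlen
    simp at hlen
    omega
  have hwin2 : ∀ a b, T2 ≤ a → a < b → A.stackAt (A.shift π k2) a = S2 →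
      A.stackAt (A.shift π k2) b = S2 → A.wd (A.shift π k2) a b ∈ cycGFEᶜ := by
    intro a b ha hab hsa hsb
    have hseg := A.seg cycGFEᶜ (A.shift π k2) a b hab (by rw [hsa, hsb])
      (fun τ h1 h2 => by rw [hsa]; exact hT2len τ (le_trans ha h1))
      (fun t c h => H2 t c h)
    refine hseg.total closedCyc_cycGFEc closedConcat_cycGFEc ?_
    have hlen : (A.wd (A.shift π k2) a b).length = b - a := by simp [Arena.wd]
    intro hnil
    rw [hnil] at hlen
    simp at hlen
    omega
  have hev1 : ∃ Tz, ∀ a b, Tz ≤ a → a < b → T1 ≤ a → T1 ≤ b →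
      A.stackAt (A.shift π k1) a = S1 → A.stackAt (A.shift π k1) b = S1 →
      ((A.wd (A.shift π k1) a b).map Prod.snd).sum = 0 := by
    by_contra hcon
    push_neg at hcon
    have grow : ∀ r : ℕ, ∃ a b : ℕ, k2 ≤ a + k1 ∧ T1 ≤ a ∧ T1 ≤ b ∧ a ≤ b ∧
        A.stackAt (A.shift π k1) a = S1 ∧ A.stackAt (A.shift π k1) b = S1 ∧
        (r : ℤ) ≤ ((A.wd (A.shift π k1) a b).map Prod.snd).sum := by
      intro r
      induction r with
      | zero =>
          obtain ⟨t, ht1, ht2, ht3⟩ := hT1occ k2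
          exact ⟨t, t, by omega, ht2, ht2, le_rfl, ht3, ht3, by simp [A.wd_self]⟩
      | succ r ih =>
          obtain ⟨a, b, hk, ha, hb, hab, hsa, hsb, hsum⟩ := ih
          obtain ⟨a', b', hba', hab', ha'T, hb'T, hsa', hsb', hne⟩ := hcon b
          have h1 : 0 ≤ ((A.wd (A.shift π k1) b a').map Prod.snd).sum := by
            rcases Nat.eq_or_lt_of_le hba' with heq | hlt
            · rw [← heq, A.wd_self]
              simp
            · exact gfe_sum (hwin1 b a' hb hlt hsb hsa')
          have h2' := gfe_sum (hwin1 a' b' ha'T hab' hsa' hsb')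
          have h2 : 1 ≤ ((A.wd (A.shift π k1) a' b').map Prod.snd).sum := by
            rcases lt_or_eq_of_le h2' with h | h
            · omega
            · exact absurd h.symm hne
          refine ⟨a, b', by omega, ha, hb'T, by omega, hsa, hsb', ?_⟩
          have e1 : A.wd (A.shift π k1) a b'
              = A.wd (A.shift π k1) a b ++ (A.wd (A.shift π k1) b a'
                ++ A.wd (A.shift π k1) a' b') := by
            rw [A.wd_append (A.shift π k1) a b b' hab (by omega),
              A.wd_append (A.shift π k1) b a' b' hba' (le_of_lt hab')]
          rw [e1, List.map_append, List.sum_append, List.map_append, List.sum_append]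
          push_cast
          linarith
    obtain ⟨a, b, hk, ha, hb, hab, hsa, hsb, hsum⟩ := grow (C.toNat + 1)
    have hub' := keyUB a b hk hab
    have hcast : ((C.toNat + 1 : ℕ) : ℤ) = C + 1 := by
      rw [Nat.cast_add, Int.toNat_of_nonneg hC0]
      simp
    rw [hcast] at hsum
    linarith
  have hev2 : ∃ Tz, ∀ a b, Tz ≤ a → a < b → T2 ≤ a → T2 ≤ b →
      A.stackAt (A.shift π k2) a = S2 → A.stackAt (A.shift π k2) b = S2 →
      ((A.wd (A.shift π k2) a b).map Prod.snd).sum = 0 := by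
    by_contra hcon
    push_neg at hcon
    have grow : ∀ r : ℕ, ∃ a b : ℕ, k1 ≤ a + k2 ∧ T2 ≤ a ∧ T2 ≤ b ∧ a ≤ b ∧
        A.stackAt (A.shift π k2) a = S2 ∧ A.stackAt (A.shift π k2) b = S2 ∧
        ((A.wd (A.shift π k2) a b).map Prod.snd).sum ≤ -(r : ℤ) := by
      intro r
      induction r with
      | zero =>
          obtain ⟨t, ht1, ht2, ht3⟩ := hT2occ k1
          exact ⟨t, t, by omega, ht2, ht2, le_rfl, ht3, ht3, by simp [A.wd_self]⟩
      | succ r ih =>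
          obtain ⟨a, b, hk, ha, hb, hab, hsa, hsb, hsum⟩ := ih
          obtain ⟨a', b', hba', hab', ha'T, hb'T, hsa', hsb', hne⟩ := hcon b
          have h1 : ((A.wd (A.shift π k2) b a').map Prod.snd).sum ≤ 0 := by
            rcases Nat.eq_or_lt_of_le hba' with heq | hlt
            · rw [← heq, A.wd_self]
              simp
            · exact not_gfe_sum (hwin2 b a' hb hlt hsb hsa')
          have h2' := not_gfe_sum (hwin2 a' b' ha'T hab' hsa' hsb')
          have h2 : ((A.wd (A.shift π k2) a' b').map Prod.snd).sum ≤ -1 := by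
            rcases lt_or_eq_of_le h2' with h | h
            · omega
            · exact absurd h hne
          refine ⟨a, b', by omega, ha, hb'T, by omega, hsa, hsb', ?_⟩
          have e1 : A.wd (A.shift π k2) a b'
              = A.wd (A.shift π k2) a b ++ (A.wd (A.shift π k2) b a'
                ++ A.wd (A.shift π k2) a' b') := by
            rw [A.wd_append (A.shift π k2) a b b' hab (by omega),
              A.wd_append (A.shift π k2) b a' b' hba' (le_of_lt hab')]
          rw [e1, List.map_append, List.sum_append, List.map_append, List.sum_append]
          push_cast
          linarith
    obtain ⟨a, b, hk, ha, hb, hab, hsa, hsb, hsum⟩ := grow (C.toNat + 1)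
    have hlb' := keyLB a b hk hab
    have hcast : ((C.toNat + 1 : ℕ) : ℤ) = C + 1 := by
      rw [Nat.cast_add, Int.toNat_of_nonneg hC0]
      simp
    rw [hcast] at hsum
    linarith
  obtain ⟨Tz1, hz1⟩ := hev1
  obtain ⟨Tz2, hz2⟩ := hev2
  set g : ℕ → ℕ := fun j => (A.lab (π j) (π (j + 1))).1 with hg
  obtain ⟨G, hGb⟩ : ∃ G, ∀ j, g j ≤ G :=
    ⟨(Finset.univ : Finset (A.V × A.V)).sup (fun p => (A.lab p.1 p.2).1),
      fun j => Finset.le_sup (f := fun p : A.V × A.V => (A.lab p.1 p.2).1)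
        (Finset.mem_univ (π j, π (j + 1)))⟩
  obtain ⟨M, N0, hN0, hMocc⟩ := recur_max g G hGb
  have hfst : ∀ k a b : ℕ, (A.wd (A.shift π k) a b).map Prod.fst
      = (List.range (b - a)).map (fun i => g (a + k + i)) := by
    intro k a b
    rw [A.wd_shift, Arena.wd, show b + k - (a + k) = b - a by omega, List.map_map]
    apply List.map_congr_left
    intro i _
    simp [hg]
  have hEven : Even M := by
    obtain ⟨a, haN, haT, hsa⟩ := hT1occ (max Tz1 N0)
    obtain ⟨j, hjge, hjM⟩ := hMocc (a + k1)
    obtain ⟨b, hbN, hbT, hsb⟩ := hT1occ (max (j + 1) (a + 1))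
    have hab : a < b := by omega
    have hw := hwin1 a b haT hab hsa hsb
    have hz := hz1 a b (by omega) hab haT hbT hsa hsb
    simp only [cycGFE, Set.mem_setOf_eq] at hw
    rcases hw with h | ⟨hs, m, hm, hbd, he⟩
    · rw [hz] at h
      exact absurd h (by norm_num)
    · have hmM : m ≤ M := by
        rw [hfst] at hm
        obtain ⟨i, hi, hieq⟩ := List.mem_map.1 hm
        rw [← hieq]
        exact hN0 _ (by omega)
      have hMm : M ≤ m := by
        apply hbd
        rw [hfst]
        refine List.mem_map.2 ⟨j - (a + k1), List.mem_range.2 (by omega), ?_⟩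
        rw [show a + k1 + (j - (a + k1)) = j by omega, hjM]
      have hmm : m = M := le_antisymm hmM hMm
      rwa [← hmm]
  obtain ⟨a, haN, haT, hsa⟩ := hT2occ (max Tz2 N0)
  obtain ⟨j, hjge, hjM⟩ := hMocc (a + k2)
  obtain ⟨b, hbN, hbT, hsb⟩ := hT2occ (max (j + 1) (a + 1))
  have hab : a < b := by omega
  have hw := hwin2 a b haT hab hsa hsb
  have hz := hz2 a b (by omega) hab haT hbT hsa hsb
  have hw' : A.wd (A.shift π k2) a b ∉ cycGFE := hw
  apply hw'
  simp only [cycGFE, Set.mem_setOf_eq]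
  right
  refine ⟨hz, M, ?_, ?_, hEven⟩
  · rw [hfst]
    refine List.mem_map.2 ⟨j - (a + k2), List.mem_range.2 (by omega), ?_⟩
    rw [show a + k2 + (j - (a + k2)) = j by omega, hjM]
  · intro x hx
    rw [hfst] at hx
    obtain ⟨i, hi, hieq⟩ := List.mem_map.1 hx
    rw [← hieq]
    exact hN0 _ (by omega)

/-- cyc-GoodForEnergy is closed under cyclic permutations, it
and its complement are closed under concatenation, and consequently every
arena is cyc-GoodForEnergy-unambiguous. -/
theorem stmt18 :
    ClosedCyc cycGFE ∧ ClosedConcat cycGFE ∧ ClosedConcat cycGFEᶜ ∧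
    ∀ A : Arena (ℕ × ℤ), A.Unambiguous cycGFE := by
  refine ⟨closedCyc_cycGFE, closedConcat_cycGFE, closedConcat_cycGFEc, ?_⟩
  intro A π _ hcontra
  obtain ⟨⟨kk1, H1⟩, ⟨kk2, H2⟩⟩ := hcontra
  exact unamb_main A π kk1 kk2 H1 H2
end

section
/- If S is a memoryless winning strategy for Player i from vertex v in a first cycle game FC(Y) with Y closed under cyclic permutations, then S is also a winning strategy from every vertex w that occurs on some play consistent with S starting from v. -/
section AuxProofs

open List

variable {U : Type} {A : Arena U}

/-- One-step relation induced by a (memoryless) strategy. -/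
def StRel (A : Arena U) (i : Fin 2) (S : A.Strategy) (x y : A.V) : Prop :=
  A.E x y ∧ (A.owner x = i → y = S [] x)

lemma consistent_stRel {i : Fin 2} {S : A.Strategy} (hmem : A.Memoryless S)
    {ρ : ℕ → A.V} (hplay : A.IsPlay ρ) (hcons : A.Consistent i S ρ) (k : ℕ) :
    StRel A i S (ρ k) (ρ (k+1)) :=
  ⟨hplay k, fun ho => (hcons k ho).trans (hmem _ [] _)⟩

lemma stRel_play {i : Fin 2} {S : A.Strategy} (hmem : A.Memoryless S)
    {τ : ℕ → A.V} (h : ∀ k, StRel A i S (τ k) (τ (k+1))) :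
    A.IsPlay τ ∧ A.Consistent i S τ :=
  ⟨fun k => (h k).1, fun k ho => ((h k).2 ho).trans (hmem [] _ _)⟩

lemma reach_of_play {i : Fin 2} {S : A.Strategy}
    {ρ : ℕ → A.V} (h : ∀ k, StRel A i S (ρ k) (ρ (k+1))) (a b : ℕ) (hab : a ≤ b) :
    Relation.ReflTransGen (StRel A i S) (ρ a) (ρ b) := by
  induction b, hab using Nat.le_induction with
  | base => exact Relation.ReflTransGen.refl
  | succ b hab ih => exact ih.tail (h b)

lemma cycleAt_eq_none_iff (π : ℕ → A.V) (n : ℕ) :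
    A.cycleAt π n = none ↔ π (n+1) ∉ A.stackAt π n := by
  simp only [Arena.cycleAt, Arena.step]
  split_ifs with h <;> simp [h]

lemma cycleAt_eq_some (π : ℕ → A.V) (n : ℕ) (h : π (n+1) ∈ A.stackAt π n) :
    A.cycleAt π n =
      some ((A.stackAt π n).drop ((A.stackAt π n).idxOf (π (n+1)))) := by
  simp only [Arena.cycleAt, Arena.step]
  rw [if_pos h]

lemma stack_of_none (π : ℕ → A.V) (n : ℕ) (h : ∀ m < n, A.cycleAt π m = none) :
    A.stackAt π n = (List.range (n+1)).map π := by
  induction n with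
  | zero => simp [Arena.stackAt, List.range_succ]
  | succ n ih =>
    have h1 : π (n+1) ∉ A.stackAt π n :=
      (cycleAt_eq_none_iff π n).1 (h n (Nat.lt_succ_self n))
    have h2 := ih (fun m hm => h m (hm.trans (Nat.lt_succ_self n)))
    show (A.step (A.stackAt π n) (π (n+1))).1 = _
    simp only [Arena.step]
    rw [if_neg h1, h2, List.range_succ (n := n+1), List.map_append]
    simp

lemma first_cycle_of_spec (π : ℕ → A.V) (N m0 : ℕ) (hm : m0 ≤ N)
    (hinj : ∀ a b, a ≤ N → b ≤ N → π a = π b → a = b)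
    (hclose : π (N+1) = π m0) :
    (∀ k < N, A.cycleAt π k = none) ∧
      A.cycleAt π N = some (((List.range (N+1)).map π).drop m0) := by
  have hall : ∀ k, k < N → A.cycleAt π k = none := by
    intro k
    induction k using Nat.strong_induction_on with
    | _ k ih =>
      intro hk
      have hs := stack_of_none (A := A) π k (fun m hm => ih m hm (hm.trans hk))
      rw [cycleAt_eq_none_iff, hs]
      intro hmem
      simp only [List.mem_map, List.mem_range] at hmem
      obtain ⟨j, hj, hje⟩ := hmem
      have := hinj j (k+1) (by omega) (by omega) hje
      omega
  refine ⟨hall, ?_⟩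
  have hs := stack_of_none (A := A) π N hall
  have hmem : π (N+1) ∈ A.stackAt π N := by
    rw [hs]
    exact List.mem_map.2 ⟨m0, List.mem_range.2 (by omega), hclose.symm⟩
  rw [cycleAt_eq_some π N hmem, hs]
  have hnd : ((List.range (N+1)).map π).Nodup := by
    refine List.Nodup.map_on ?_ (List.nodup_range)
    intro x hx y hy hxy
    exact hinj x y (by have := List.mem_range.1 hx; omega)
      (by have := List.mem_range.1 hy; omega) hxy
  have hl : m0 < ((List.range (N+1)).map π).length := by simp; omega
  have h1 : ((List.range (N+1)).map π).idxOf (π (N+1)) = m0 := by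
    have := List.Nodup.idxOf_getElem hnd m0 hl
    simpa [hclose] using this
  rw [h1]

lemma first_cycle_extract (π : ℕ → A.V) (n : ℕ) (c : List A.V)
    (hnone : ∀ m < n, A.cycleAt π m = none) (hsome : A.cycleAt π n = some c) :
    ∃ t, t ≤ n ∧ π (n+1) = π t ∧ (∀ a b, a ≤ n → b ≤ n → π a = π b → a = b) ∧
      c = ((List.range (n+1)).map π).drop t := by
  have hs := stack_of_none (A := A) π n hnone
  have hmem : π (n+1) ∈ A.stackAt π n := by
    by_contra h
    rw [(cycleAt_eq_none_iff π n).2 h] at hsome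
    exact nomatch hsome
  have hinj : ∀ a b, a ≤ n → b ≤ n → π a = π b → a = b := by
    have key : ∀ a b, a < b → b ≤ n → π a ≠ π b := by
      intro a b hab hbn he
      obtain ⟨b', rfl⟩ : ∃ b', b = b' + 1 := ⟨b - 1, by omega⟩
      have hb' : b' < n := by omega
      have hn' := (cycleAt_eq_none_iff π b').1 (hnone b' hb')
      apply hn'
      rw [stack_of_none (A := A) π b' (fun m hm => hnone m (by omega))]
      exact List.mem_map.2 ⟨a, List.mem_range.2 (by omega), he⟩
    intro a b ha hb he
    rcases lt_trichotomy a b with h | h | h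
    · exact absurd he (key a b h hb)
    · exact h
    · exact absurd he.symm (key b a h ha)
  rw [cycleAt_eq_some π n hmem, Option.some_inj] at hsome
  rw [hs] at hsome hmem
  have htlen : ((List.range (n+1)).map π).idxOf (π (n+1)) <
      ((List.range (n+1)).map π).length := List.idxOf_lt_length_iff.2 hmem
  have htn : ((List.range (n+1)).map π).idxOf (π (n+1)) ≤ n := by
    have := htlen
    simp at this
    omega
  refine ⟨((List.range (n+1)).map π).idxOf (π (n+1)), htn, ?_, hinj, hsome.symm⟩
  have h2 := List.getElem_idxOf htlen
  simp only [List.getElem_map, List.getElem_range] at h2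
  exact h2.symm

lemma exists_cycle (π : ℕ → A.V) : ∃ n, A.cycleAt π n ≠ none := by
  by_contra h
  push_neg at h
  have hinj : ∀ a b : ℕ, a < b → π a ≠ π b := by
    intro a b hab he
    obtain ⟨b', rfl⟩ : ∃ b', b = b' + 1 := ⟨b - 1, by omega⟩
    have := (cycleAt_eq_none_iff (A := A) π b').1 (h b')
    apply this
    rw [stack_of_none (A := A) π b' (fun m _ => h m)]
    exact List.mem_map.2 ⟨a, List.mem_range.2 (by omega), he⟩
  have hnd : ((List.range (Fintype.card A.V + 1)).map π).Nodup := by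
    refine List.Nodup.map_on ?_ (List.nodup_range)
    intro x _ y _ hxy
    by_contra hne
    rcases lt_or_gt_of_ne hne with hlt | hlt
    · exact hinj x y hlt hxy
    · exact hinj y x hlt hxy.symm
  have := hnd.length_le_card
  simp at this

lemma mod_succ_eq (p j : ℕ) (hp : 0 < p) :
    (j+1) % p = if j % p + 1 = p then 0 else j % p + 1 := by
  have h1 : (j+1) % p = (j % p + 1 % p) % p := Nat.add_mod j 1 p
  rcases eq_or_lt_of_le (Nat.succ_le_of_lt hp) with h | h
  · have : p = 1 := by omega
    subst this
    simp [Nat.mod_one]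
  · have h2 : 1 % p = 1 := Nat.mod_eq_of_lt h
    rw [h2] at h1
    have hlt := Nat.mod_lt j hp
    split_ifs with h3
    · rw [h1, h3, Nat.mod_self]
    · rw [h1, Nat.mod_eq_of_lt (by omega)]

lemma rotate_mem_of_closedCyc {Y : Set (List U)} (hY : ClosedCyc Y)
    (l : List U) (hl : l ∈ Y) : ∀ d, l.rotate d ∈ Y := by
  intro d
  induction d with
  | zero => simpa using hl
  | succ d ih =>
    have he : l.rotate (d+1) = (l.rotate d).rotate 1 := by
      rw [List.rotate_rotate]
    rw [he]
    rcases hrd : l.rotate d with _ | ⟨a, b⟩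
    · rw [hrd] at ih
      simpa using ih
    · rw [hrd] at ih
      have := hY a b ih
      simpa [List.rotate_cons_succ] using this

lemma mem_of_rotate_mem {Y : Set (List U)} (hY : ClosedCyc Y)
    (l : List U) (d : ℕ) (h : l.rotate d ∈ Y) : l ∈ Y := by
  rcases eq_or_ne l [] with rfl | hl
  · simpa using h
  have hlen : 0 < l.length := List.length_pos_iff.2 hl
  rcases Nat.eq_zero_or_pos (d % l.length) with h0 | h0
  · rw [← List.rotate_mod, h0, List.rotate_zero] at h
    exact h
  · have hmem := rotate_mem_of_closedCyc hY _ h (l.length - d % l.length)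
    rw [List.rotate_rotate] at hmem
    have h3 : d % l.length < l.length := Nat.mod_lt _ hlen
    have e : (d + (l.length - d % l.length)) % l.length = 0 := by
      have h1 := Nat.add_mod d (l.length - d % l.length) l.length
      have h2 : (l.length - d % l.length) % l.length =
          l.length - d % l.length := Nat.mod_eq_of_lt (by omega)
      rw [h2] at h1
      rw [h1]
      have h4 : d % l.length + (l.length - d % l.length) = l.length := by omega
      rw [h4, Nat.mod_self]
    rwa [← List.rotate_mod, e, List.rotate_zero] at hmem

lemma drop_map_range {α : Type*} (f : ℕ → α) (a b : ℕ) :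
    ((List.range b).map f).drop a = (List.range (b - a)).map (fun r => f (a + r)) := by
  apply List.ext_getElem
  · simp
  · intro i h1 h2
    simp

lemma cycLabels_map_range (g : ℕ → A.V) (p : ℕ) (hp : 0 < p) :
    A.cycLabels ((List.range p).map g) =
      (List.range p).map (fun r => A.lab (g r) (g ((r+1) % p))) := by
  obtain ⟨q, rfl⟩ : ∃ q, p = q + 1 := ⟨p - 1, by omega⟩
  have hcons : (List.range (q+1)).map g =
      g 0 :: (List.range q).map (fun r => g (r+1)) := by
    rw [List.range_succ_eq_map, List.map_cons, List.map_map]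
    rfl
  rw [hcons]
  show List.zipWith A.lab _ _ = _
  apply List.ext_getElem
  · simp
  · intro i hi1 hi2
    simp only [List.length_zipWith, List.length_cons, List.length_map,
      List.length_range, List.length_append, min_self] at hi1
    rw [List.getElem_zipWith]
    simp only [List.getElem_map, List.getElem_range]
    congr 1
    · rcases i with _ | i'
      · simp
      · simp
    · rcases Nat.lt_or_ge i q with h | h
      · rw [List.getElem_append_left (by simpa using h)]
        simp [Nat.mod_eq_of_lt (by omega : i + 1 < q + 1)]
      · have hiq : i = q := by omega
        subst hiq
        rw [List.getElem_append_right (by simp)]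
        simp

lemma loop_step {i : Fin 2} {S : A.Strategy} {ρ : ℕ → A.V} {t n : ℕ}
    (ht : t ≤ n) (hclose : ρ (n+1) = ρ t)
    (hρ : ∀ k, StRel A i S (ρ k) (ρ (k+1))) (j : ℕ) :
    ρ (t + (j+1) % (n+1-t)) = ρ ((t + j % (n+1-t)) + 1) ∧
      StRel A i S (ρ (t + j % (n+1-t))) (ρ (t + (j+1) % (n+1-t))) := by
  set p := n + 1 - t with hpdef
  have hp0 : 0 < p := by omega
  have hms := mod_succ_eq p j hp0
  have hlt := Nat.mod_lt j hp0
  have h1 : ρ (t + (j+1) % p) = ρ (t + j % p + 1) := by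
    by_cases h3 : j % p + 1 = p
    · rw [hms, if_pos h3]
      show ρ t = _
      rw [← hclose]
      exact congrArg ρ (by omega)
    · rw [hms, if_neg h3]
      exact congrArg ρ (by omega)
  refine ⟨h1, ?_⟩
  rw [h1]
  exact hρ (t + j % p)

lemma reach_loop {i : Fin 2} {S : A.Strategy} {ρ : ℕ → A.V} {t n : ℕ}
    (ht : t ≤ n) (hclose : ρ (n+1) = ρ t)
    (hρ : ∀ k, StRel A i S (ρ k) (ρ (k+1)))
    (x : A.V) (hreach : Relation.ReflTransGen (StRel A i S) x (ρ t)) :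
    ∃ (τ : ℕ → A.V) (m s : ℕ),
      τ 0 = x ∧ (∀ k, StRel A i S (τ k) (τ (k+1))) ∧
      (∀ k, k < m → ∀ r, t ≤ r → r ≤ n → τ k ≠ ρ r) ∧
      (∀ k l, k < l → l < m → τ k ≠ τ l) ∧
      t ≤ s ∧ s ≤ n ∧
      (∀ r, τ (m + r) = ρ (t + (s - t + r) % (n+1-t))) := by
  have hp0 : 0 < n + 1 - t := by omega
  have base : ∀ s, t ≤ s → s ≤ n →
      ∃ (τ : ℕ → A.V) (m s' : ℕ), τ 0 = ρ s ∧
        (∀ k, StRel A i S (τ k) (τ (k+1))) ∧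
        (∀ k, k < m → ∀ r, t ≤ r → r ≤ n → τ k ≠ ρ r) ∧
        (∀ k l, k < l → l < m → τ k ≠ τ l) ∧
        t ≤ s' ∧ s' ≤ n ∧
        (∀ r, τ (m + r) = ρ (t + (s' - t + r) % (n+1-t))) := by
    intro s hts hsn
    refine ⟨fun r => ρ (t + (s - t + r) % (n+1-t)), 0, s, ?_, ?_, ?_, ?_,
      hts, hsn, ?_⟩
    · show ρ (t + (s - t + 0) % (n+1-t)) = ρ s
      rw [Nat.add_zero, Nat.mod_eq_of_lt (by omega)]
      exact congrArg ρ (by omega)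
    · intro k
      have h2 := (loop_step ht hclose hρ (s - t + k)).2
      have e : s - t + (k+1) = (s - t + k) + 1 := by omega
      show StRel A i S (ρ (t + (s - t + k) % (n+1-t)))
        (ρ (t + (s - t + (k+1)) % (n+1-t)))
      rw [e]
      exact h2
    · intro k hk
      exact absurd hk (Nat.not_lt_zero k)
    · intro k l _ hl
      exact absurd hl (Nat.not_lt_zero l)
    · intro r
      show ρ (t + (s - t + (0 + r)) % (n+1-t)) = _
      rw [Nat.zero_add]
  induction hreach using Relation.ReflTransGen.head_induction_on with
  | refl => exact base t le_rfl ht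
  | head hyz _ ih =>
    rename_i y z _
    by_cases hy : ∃ s, t ≤ s ∧ s ≤ n ∧ y = ρ s
    · obtain ⟨s, h1, h2, h3⟩ := hy
      obtain ⟨τ, m, s', hb⟩ := base s h1 h2
      exact ⟨τ, m, s', by rw [h3]; exact hb.1, hb.2.1, hb.2.2.1, hb.2.2.2.1,
        hb.2.2.2.2.1, hb.2.2.2.2.2.1, hb.2.2.2.2.2.2⟩
    · push_neg at hy
      obtain ⟨τ, m, s', hτ0, hτstep, havoid, hdist, hs1, hs2, hloop⟩ := ih
      by_cases hk : ∃ k, k < m ∧ τ k = y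
      · obtain ⟨k, hkm, hky⟩ := hk
        refine ⟨fun r => τ (k + r), m - k, s', hky, ?_, ?_, ?_, hs1, hs2, ?_⟩
        · intro r
          show StRel A i S (τ (k+r)) (τ (k+(r+1)))
          have e : k + (r+1) = (k+r)+1 := by omega
          rw [e]
          exact hτstep _
        · intro l hl r hr1 hr2
          exact havoid (k+l) (by omega) r hr1 hr2
        · intro a b hab hbm
          exact hdist (k+a) (k+b) (by omega) (by omega)
        · intro r
          show τ (k + (m - k + r)) = _
          have e : k + (m - k + r) = m + r := by omega
          rw [e]
          exact hloop r
      · push_neg at hk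
        refine ⟨fun r => match r with | 0 => y | Nat.succ r' => τ r',
          m+1, s', rfl, ?_, ?_, ?_, hs1, hs2, ?_⟩
        · intro r
          match r with
          | 0 =>
            show StRel A i S y (τ 0)
            rw [hτ0]
            exact hyz
          | Nat.succ r' =>
            show StRel A i S (τ r') (τ (r'+1))
            exact hτstep r'
        · intro r hrm s hs1' hs2'
          match r with
          | 0 =>
            show y ≠ ρ s
            exact hy s hs1' hs2'
          | Nat.succ r' =>
            show τ r' ≠ ρ s
            exact havoid r' (by omega) s hs1' hs2'
        · intro a b hab hbm
          match a, b with
          | a, 0 => omega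
          | 0, Nat.succ b' =>
            show y ≠ τ b'
            intro he
            exact hk b' (by omega) he.symm
          | Nat.succ a', Nat.succ b' =>
            show τ a' ≠ τ b'
            exact hdist a' b' (by omega) (by omega)
        · intro r
          have e : m + 1 + r = Nat.succ (m + r) := by omega
          rw [e]
          show τ (m + r) = _
          exact hloop r

lemma transfer {i : Fin 2} {S : A.Strategy} (hmem : A.Memoryless S)
    (v : A.V) (ρ : ℕ → A.V)
    (hρst : ∀ k, StRel A i S (ρ k) (ρ (k+1)))
    (hreach : Relation.ReflTransGen (StRel A i S) v (ρ 0))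
    (n : ℕ) (c : List A.V)
    (hnone : ∀ m < n, A.cycleAt ρ m = none) (hsome : A.cycleAt ρ n = some c) :
    ∃ (τ : ℕ → A.V) (N : ℕ) (c' : List A.V),
      A.IsPlay τ ∧ τ 0 = v ∧ A.Consistent i S τ ∧
      (∀ k < N, A.cycleAt τ k = none) ∧ A.cycleAt τ N = some c' ∧
      ∃ d, A.cycLabels c' = (A.cycLabels c).rotate d := by
  obtain ⟨t, ht, hclose, hinjρ, hc⟩ := first_cycle_extract ρ n c hnone hsome
  set p := n + 1 - t with hpdef
  have hp0 : 0 < p := by omega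
  have hreacht : Relation.ReflTransGen (StRel A i S) v (ρ t) :=
    hreach.trans (reach_of_play hρst 0 t (Nat.zero_le t))
  obtain ⟨τ, m, s, hτ0, hτstep, havoid, hdist, hs1, hs2, hloop⟩ :=
    reach_loop ht hclose hρst v hreacht
  set d := s - t with hddef
  rw [← hpdef] at hloop
  have hd : d < p := by omega
  -- closing equality
  have hτmp : τ (m + p) = τ m := by
    have h0 := hloop 0
    rw [Nat.add_zero, Nat.add_zero] at h0
    rw [hloop p, h0]
    have e1 : (d + p) % p = d := by
      rw [Nat.add_mod_right, Nat.mod_eq_of_lt hd]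
    rw [e1, Nat.mod_eq_of_lt hd]
  -- injectivity up to m + p - 1
  have hτinj : ∀ a b, a ≤ m + p - 1 → b ≤ m + p - 1 → τ a = τ b → a = b := by
    have key : ∀ a b, a < b → b < m + p → τ a ≠ τ b := by
      intro a b hab hbmp he
      rcases Nat.lt_or_ge b m with hbm | hbm
      · exact hdist a b hab hbm he
      · obtain ⟨rb, rfl⟩ : ∃ rb, b = m + rb := ⟨b - m, by omega⟩
        have hrb : rb < p := by omega
        rcases Nat.lt_or_ge a m with ham | ham
        · have hv := hloop rb
          have hmod : (d + rb) % p < p := Nat.mod_lt _ hp0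
          exact havoid a ham (t + (d + rb) % p) (by omega) (by omega) (he.trans hv)
        · obtain ⟨ra, rfl⟩ : ∃ ra, a = m + ra := ⟨a - m, by omega⟩
          have hra : ra < rb := by omega
          rw [hloop ra, hloop rb] at he
          have hmoda : (d + ra) % p < p := Nat.mod_lt _ hp0
          have hmodb : (d + rb) % p < p := Nat.mod_lt _ hp0
          have heq := hinjρ _ _ (by omega) (by omega) he
          have heq2 : (d + ra) % p = (d + rb) % p := by omega
          have hmeq : ra % p = rb % p :=
            Nat.ModEq.add_left_cancel' d heq2
          rw [Nat.mod_eq_of_lt (by omega), Nat.mod_eq_of_lt hrb] at hmeq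
          omega
    intro a b ha hb he
    rcases lt_trichotomy a b with h | h | h
    · exact absurd he (key a b h (by omega))
    · exact h
    · exact absurd he.symm (key b a h (by omega))
  have hNe : (m + p - 1) + 1 = m + p := by omega
  have hspec := first_cycle_of_spec τ (m + p - 1) m (by omega) hτinj
    (by rw [hNe]; exact hτmp)
  obtain ⟨hnoneτ, hsomeτ⟩ := hspec
  obtain ⟨hτplay, hτcons⟩ := stRel_play hmem hτstep
  refine ⟨τ, m + p - 1, _, hτplay, hτ0, hτcons, hnoneτ, hsomeτ, d, ?_⟩
  -- labels computation
  have hc' : ((List.range ((m + p - 1)+1)).map τ).drop m =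
      (List.range p).map (fun r => τ (m + r)) := by
    rw [hNe, drop_map_range, show m + p - m = p from by omega]
  have hcρ : c = (List.range p).map (fun r => ρ (t + r)) := by
    rw [hc, drop_map_range]
  rw [hc', hcρ]
  rw [cycLabels_map_range (fun r => τ (m + r)) p hp0,
    cycLabels_map_range (fun r => ρ (t + r)) p hp0]
  apply List.ext_getElem
  · simp
  · intro j hj1 hj2
    simp only [List.length_map, List.length_range] at hj1
    rw [List.getElem_rotate]
    simp only [List.getElem_map, List.getElem_range, List.length_map,
      List.length_range]
    have hjp : j < p := hj1
    rw [hloop j, hloop ((j+1) % p)]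
    congr 1
    · exact congrArg ρ (by rw [Nat.add_comm d j])
    · -- ρ (t + (d + (j+1)%p) % p) = ρ (t + ((j+d)%p + 1) % p)
      refine congrArg ρ ?_
      have h1 : (d + (j+1) % p) % p = (d + (j+1)) % p :=
        (Nat.ModEq.refl d).add ((j+1).mod_modEq p)
      have h2 : ((j+d) % p + 1) % p = ((j+d) + 1) % p :=
        ((j+d).mod_modEq p).add (Nat.ModEq.refl 1)
      have h3 : (d + (j+1)) % p = ((j+d) + 1) % p := by
        congr 1
        omega
      rw [h1, h3, ← h2]

end AuxProofs

/-- a memoryless winning strategy for the first cycle game of a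
cyclic-permutation-closed Y also wins from every vertex reachable along a
consistent play. -/
theorem stmt19 {U : Type} (A : Arena U) (Y : Set (List U)) (hY : ClosedCyc Y)
    (i : Fin 2) (S : A.Strategy) (v : A.V) (hmem : A.Memoryless S)
    (hwin : A.WinsFrom (A.FCObj Y) i S v) (w : A.V)
    (hw : ∃ π j, A.IsPlay π ∧ π 0 = v ∧ A.Consistent i S π ∧ π j = w) :
    A.WinsFrom (A.FCObj Y) i S w := by
  classical
  obtain ⟨hleg, hwin2⟩ := hwin
  refine ⟨hleg, ?_⟩
  intro ρ hρplay hρ0 hρcons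
  obtain ⟨π₀, j, hπp, hπ0, hπc, hπj⟩ := hw
  have hρst : ∀ k, StRel A i S (ρ k) (ρ (k+1)) :=
    fun k => consistent_stRel hmem hρplay hρcons k
  have hπst : ∀ k, StRel A i S (π₀ k) (π₀ (k+1)) :=
    fun k => consistent_stRel hmem hπp hπc k
  have hreachw : Relation.ReflTransGen (StRel A i S) v (ρ 0) := by
    have := reach_of_play hπst 0 j (Nat.zero_le j)
    rwa [hπ0, hπj, ← hρ0] at this
  have hi : i = 0 ∨ i = 1 := by
    rcases i with ⟨iv, hiv⟩
    interval_cases iv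
    · exact Or.inl rfl
    · exact Or.inr rfl
  rcases hi with rfl | rfl
  · rw [if_pos rfl]
    have hex : ∃ n, A.cycleAt ρ n ≠ none := exists_cycle ρ
    set n := Nat.find hex with hndef
    have hnsome : A.cycleAt ρ n ≠ none := Nat.find_spec hex
    have hnone : ∀ m < n, A.cycleAt ρ m = none :=
      fun m hm => not_not.1 (Nat.find_min hex hm)
    obtain ⟨c, hc⟩ := Option.ne_none_iff_exists'.1 hnsome
    obtain ⟨τ, N, c', hplay', h0', hcons', hnone', hsome', d, hlab⟩ :=
      transfer hmem v ρ hρst hreachw n c hnone hc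
    have hFC := hwin2 τ hplay' h0' hcons'
    rw [if_pos rfl] at hFC
    obtain ⟨N2, c2, hs2, hn2, hY2⟩ := hFC
    have hNe : N2 = N := by
      by_contra hne
      rcases Nat.lt_or_ge N2 N with h | h
      · rw [hnone' N2 h] at hs2
        exact nomatch hs2
      · have h' : N < N2 := by omega
        rw [hn2 N h'] at hsome'
        exact nomatch hsome'
    subst hNe
    rw [hsome'] at hs2
    rw [Option.some_inj] at hs2
    subst hs2
    rw [hlab] at hY2
    exact ⟨n, c, hc, hnone, mem_of_rotate_mem hY _ d hY2⟩
  · rw [if_neg (by decide)]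
    intro hFC
    obtain ⟨n, c, hc, hnone, hcY⟩ := hFC
    obtain ⟨τ, N, c', hplay', h0', hcons', hnone', hsome', d, hlab⟩ :=
      transfer hmem v ρ hρst hreachw n c hnone hc
    have hnFC := hwin2 τ hplay' h0' hcons'
    rw [if_neg (by decide)] at hnFC
    exact hnFC ⟨N, c', hsome', hnone', by
      rw [hlab]; exact rotate_mem_of_closedCyc hY _ hcY d⟩
end
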